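/- arXiv:0902.4732 — 12 statements merged into one kernel-verified Lean document; each statement's English description precedes it below -/
import Mathlib

section
/- For every integer k ≥ 2, the matrix product B^∧_k := A^∧_{4k−3} · A^∧_{4k−4} · A^∧_{4k−5} · A^∧_{4k−6} equals the 2×2 matrix with rows (5k(k−1)³, k(12k²−15k+5)) and (12k(k+1)(k−1)³, k(k+1)(29k²−36k+12)). -/
/-- For `k ≥ 2`, the product `B^∧_k = A^∧_{4k−3} A^∧_{4k−4} A^∧_{4k−5} A^∧_{4k−6}` of the
matrices `A^∧_ν = [[0,1],[a^∧_{ν+1}, b^∧_{ν+1}]]` built from Nesterenko's continued fraction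
coefficients equals the stated 2×2 matrix. -/
theorem stmt_3 (a b : ℕ → ℚ) (A : ℕ → Matrix (Fin 2) (Fin 2) ℚ)
    (hb0 : b 0 = 1) (ha1 : a 1 = 1) (hb1 : b 1 = 4) (ha2 : a 2 = 4) (hb2 : b 2 = 4)
    (h1 : ∀ k : ℕ, 1 ≤ k →
      b (4 * k + 1) = 2 * (k : ℚ) + 2 ∧ a (4 * k + 1) = (k : ℚ) * ((k : ℚ) + 1) ∧
      b (4 * k + 2) = 2 * (k : ℚ) + 4 ∧ a (4 * k + 2) = ((k : ℚ) + 1) * ((k : ℚ) + 2))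
    (h2 : ∀ k : ℕ,
      b (4 * k + 3) = 2 * (k : ℚ) + 3 ∧ a (4 * k + 3) = ((k : ℚ) + 1) ^ 2 ∧
      b (4 * k + 4) = 2 * (k : ℚ) + 2 ∧ a (4 * k + 4) = ((k : ℚ) + 2) ^ 2)
    (hA : ∀ ν : ℕ, A ν = !![0, 1; a (ν + 1), b (ν + 1)]) :
    ∀ k : ℕ, 2 ≤ k →
      A (4 * k - 3) * A (4 * k - 4) * A (4 * k - 5) * A (4 * k - 6) =
        !![5 * (k : ℚ) * ((k : ℚ) - 1) ^ 3,
             (k : ℚ) * (12 * (k : ℚ) ^ 2 - 15 * (k : ℚ) + 5);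
           12 * (k : ℚ) * ((k : ℚ) + 1) * ((k : ℚ) - 1) ^ 3,
             (k : ℚ) * ((k : ℚ) + 1) * (29 * (k : ℚ) ^ 2 - 36 * (k : ℚ) + 12)] := by
  intro k hk
  obtain ⟨m, rfl⟩ : ∃ m, k = m + 2 := ⟨k - 2, by omega⟩
  have e3 : 4 * (m + 2) - 3 = 4 * (m + 1) + 1 := by omega
  have e4 : 4 * (m + 2) - 4 = 4 * m + 4 := by omega
  have e5 : 4 * (m + 2) - 5 = 4 * m + 3 := by omega
  have e6 : 4 * (m + 2) - 6 = 4 * m + 2 := by omega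
  obtain ⟨hb1', ha1', hb2', ha2'⟩ := h1 (m + 1) (by omega)
  obtain ⟨hb3', ha3', hb4', ha4'⟩ := h2 m
  push_cast at *
  rw [e3, e4, e5, e6, hA, hA, hA, hA,
    show 4 * (m + 1) + 1 + 1 = 4 * (m + 1) + 2 from by ring,
    show 4 * m + 4 + 1 = 4 * (m + 1) + 1 from by ring,
    show 4 * m + 3 + 1 = 4 * m + 4 from by ring,
    show 4 * m + 2 + 1 = 4 * m + 3 from by ring,
    ha1', hb1', ha2', hb2', ha3', hb3', ha4', hb4']
  ext i j
  fin_cases i <;> fin_cases j <;>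
    simp [Matrix.mul_apply, Fin.sum_univ_succ] <;> ring
end

section
/- For every integer k ≥ 3, A^∨_{k−1} · H_{k−1} = H_k · B^∧_k as 2×2 rational matrices, where A^∨_{k−1} has rows (0, 1) and (−(k−1)⁶, 34k³−51k²+27k−5), and B^∧_k has rows (5k(k−1)³, k(12k²−15k+5)) and (12k(k+1)(k−1)³, k(k+1)(29k²−36k+12)). -/
/-- For `k ≥ 3`, `A^∨_{k−1} · H_{k−1} = H_k · B^∧_k`, where
`A^∨_{k−1} = [[0,1],[−(k−1)⁶, 34k³−51k²+27k−5]]`,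
`H₁ = (1/4)·[[−24,5],[0,1]]`, `H_k = [[12(k+2)(k+1)c(k+1), −5(k+2)c(k+1)],[0, −(k−1)³c(k)]]`
with `c(k) = (−2(k−1)³(k+1)!)⁻¹`, and `B^∧_k` is the stated explicit matrix. -/
theorem stmt_4 (c : ℕ → ℚ) (H : ℕ → Matrix (Fin 2) (Fin 2) ℚ)
    (hc : ∀ k : ℕ, 2 ≤ k →
      c k = (-2 * ((k : ℚ) - 1) ^ 3 * (Nat.factorial (k + 1) : ℚ))⁻¹)
    (hH1 : H 1 = (1 / 4 : ℚ) • !![-24, 5; 0, 1])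
    (hH : ∀ k : ℕ, 2 ≤ k → H k =
      !![12 * ((k : ℚ) + 2) * ((k : ℚ) + 1) * c (k + 1), -5 * ((k : ℚ) + 2) * c (k + 1);
         0, -((k : ℚ) - 1) ^ 3 * c k]) :
    ∀ k : ℕ, 3 ≤ k →
      !![0, 1;
         -((k : ℚ) - 1) ^ 6, 34 * (k : ℚ) ^ 3 - 51 * (k : ℚ) ^ 2 + 27 * (k : ℚ) - 5] * H (k - 1) =
      H k *
        !![5 * (k : ℚ) * ((k : ℚ) - 1) ^ 3,
             (k : ℚ) * (12 * (k : ℚ) ^ 2 - 15 * (k : ℚ) + 5);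
           12 * (k : ℚ) * ((k : ℚ) + 1) * ((k : ℚ) - 1) ^ 3,
             (k : ℚ) * ((k : ℚ) + 1) * (29 * (k : ℚ) ^ 2 - 36 * (k : ℚ) + 12)] := by
  intro k hk
  obtain ⟨n, rfl⟩ : ∃ n, k = n + 3 := ⟨k - 3, by omega⟩
  have e1 : n + 3 - 1 = n + 2 := by omega
  rw [e1, hH (n + 2) (by omega), hH (n + 3) (by omega),
    hc (n + 2) (by omega), hc (n + 3) (by omega), hc (n + 4) (by omega)]
  have hf3 : (Nat.factorial (n + 4) : ℚ) = (n + 4) * Nat.factorial (n + 3) := by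
    rw [show n + 4 = (n + 3) + 1 from rfl, Nat.factorial_succ]; push_cast; ring
  have hf4 : (Nat.factorial (n + 5) : ℚ) = (n + 5) * ((n + 4) * Nat.factorial (n + 3)) := by
    rw [show n + 5 = (n + 4) + 1 from rfl, Nat.factorial_succ]; push_cast [hf3]; ring
  have hfne : (Nat.factorial (n + 3) : ℚ) ≠ 0 := by positivity
  have hn : (0 : ℚ) ≤ n := Nat.cast_nonneg n
  have h1 : ((n : ℚ) + 2) - 1 ≠ 0 := by intro h0; linarith
  have h2 : ((n : ℚ) + 3) - 1 ≠ 0 := by intro h0; linarith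
  have h3 : ((n : ℚ) + 4) - 1 ≠ 0 := by intro h0; linarith
  rw [hf3, hf4]
  ext i j
  fin_cases i <;> fin_cases j <;>
    · simp [Matrix.mul_apply, Fin.sum_univ_two]
      push_cast
      field_simp
      ring
end

section
/- For every integer k ≥ 1, U^∨_k = H_k · U^∧_{4k−2}, where U^∨_ν is the 2×2 matrix with rows (P^∨_{ν−1}, Q^∨_{ν−1}), (P^∨_ν, Q^∨_ν) and U^∧_ν is the 2×2 matrix with rows (P^∧_{ν−1}, Q^∧_{ν−1}), (P^∧_ν, Q^∧_ν). -/
/-- `α` entry of the transition matrix in closed form. -/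
def stmt5al (k : ℕ) : ℚ :=
  -12 * ((k : ℚ) + 2) * ((k : ℚ) + 1) / (2 * (k : ℚ) ^ 3 * (Nat.factorial (k + 2) : ℚ))

/-- `β` entry of the transition matrix in closed form. -/
def stmt5be (k : ℕ) : ℚ :=
  5 * ((k : ℚ) + 2) / (2 * (k : ℚ) ^ 3 * (Nat.factorial (k + 2) : ℚ))

/-- `δ` entry of the transition matrix in closed form. -/
def stmt5de (k : ℕ) : ℚ :=
  1 / (2 * (Nat.factorial (k + 1) : ℚ))

lemma stmt5_mat2 {a b c d e f g h : ℚ}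
    (h00 : a = e) (h01 : b = f) (h10 : c = g) (h11 : d = h) :
    !![a, b; c, d] = !![e, f; g, h] := by
  subst h00; subst h01; subst h10; subst h11; rfl

/-- For every `k ≥ 1`, `U^∨_k = H_k · U^∧_{4k−2}`, where `U^∨_ν`, `U^∧_ν` are the 2×2
matrices of consecutive convergent numerators/denominators of the continued fractions
with coefficients `a^∨, b^∨` and `a^∧, b^∧` respectively, and `H_k` is the transition
matrix built from `c(k) = (−2(k−1)³(k+1)!)⁻¹`. -/
theorem stmt_5
    -- Nesterenko coefficients a^∧, b^∧ and their convergents P^∧, Q^∧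
    (ah bh Ph Qh : ℤ → ℚ)
    (hbh0 : bh 0 = 1) (hah1 : ah 1 = 1) (hbh1 : bh 1 = 4) (hah2 : ah 2 = 4) (hbh2 : bh 2 = 4)
    (hh1 : ∀ k : ℤ, 1 ≤ k →
      bh (4 * k + 1) = 2 * (k : ℚ) + 2 ∧ ah (4 * k + 1) = (k : ℚ) * ((k : ℚ) + 1) ∧
      bh (4 * k + 2) = 2 * (k : ℚ) + 4 ∧ ah (4 * k + 2) = ((k : ℚ) + 1) * ((k : ℚ) + 2))
    (hh2 : ∀ k : ℤ, 0 ≤ k →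
      bh (4 * k + 3) = 2 * (k : ℚ) + 3 ∧ ah (4 * k + 3) = ((k : ℚ) + 1) ^ 2 ∧
      bh (4 * k + 4) = 2 * (k : ℚ) + 2 ∧ ah (4 * k + 4) = ((k : ℚ) + 2) ^ 2)
    (hPhm : Ph (-1) = 1) (hQhm : Qh (-1) = 0) (hPh0 : Ph 0 = bh 0) (hQh0 : Qh 0 = 1)
    (hPhrec : ∀ ν : ℤ, 0 ≤ ν → Ph (ν + 1) = bh (ν + 1) * Ph ν + ah (ν + 1) * Ph (ν - 1))
    (hQhrec : ∀ ν : ℤ, 0 ≤ ν → Qh (ν + 1) = bh (ν + 1) * Qh ν + ah (ν + 1) * Qh (ν - 1))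
    -- Apéry coefficients a^∨, b^∨ and their convergents P^∨, Q^∨
    (av bv Pv Qv : ℤ → ℚ)
    (hbv0 : bv 0 = 0) (hbv1 : bv 1 = 5) (hav1 : av 1 = 6)
    (hv : ∀ ν : ℤ, 1 ≤ ν →
      bv (ν + 1) = 34 * (ν : ℚ) ^ 3 + 51 * (ν : ℚ) ^ 2 + 27 * (ν : ℚ) + 5 ∧
      av (ν + 1) = -(ν : ℚ) ^ 6)
    (hPvm : Pv (-1) = 1) (hQvm : Qv (-1) = 0) (hPv0 : Pv 0 = bv 0) (hQv0 : Qv 0 = 1)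
    (hPvrec : ∀ ν : ℤ, 0 ≤ ν → Pv (ν + 1) = bv (ν + 1) * Pv ν + av (ν + 1) * Pv (ν - 1))
    (hQvrec : ∀ ν : ℤ, 0 ≤ ν → Qv (ν + 1) = bv (ν + 1) * Qv ν + av (ν + 1) * Qv (ν - 1))
    -- the matrices H_k
    (c : ℕ → ℚ) (H : ℕ → Matrix (Fin 2) (Fin 2) ℚ)
    (hc : ∀ k : ℕ, 2 ≤ k →
      c k = (-2 * ((k : ℚ) - 1) ^ 3 * (Nat.factorial (k + 1) : ℚ))⁻¹)
    (hH1 : H 1 = (1 / 4 : ℚ) • !![-24, 5; 0, 1])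
    (hH : ∀ k : ℕ, 2 ≤ k → H k =
      !![12 * ((k : ℚ) + 2) * ((k : ℚ) + 1) * c (k + 1), -5 * ((k : ℚ) + 2) * c (k + 1);
         0, -((k : ℚ) - 1) ^ 3 * c k]) :
    ∀ k : ℕ, 1 ≤ k →
      !![Pv ((k : ℤ) - 1), Qv ((k : ℤ) - 1); Pv (k : ℤ), Qv (k : ℤ)] =
        H k * !![Ph (4 * (k : ℤ) - 3), Qh (4 * (k : ℤ) - 3);
                 Ph (4 * (k : ℤ) - 2), Qh (4 * (k : ℤ) - 2)] := by
  have hfac : ∀ n : ℕ, ((Nat.factorial n : ℚ)) ≠ 0 :=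
    fun n => Nat.cast_ne_zero.2 (Nat.factorial_ne_zero n)
  -- unified closed form for H k, k ≥ 1
  have hHk : ∀ k : ℕ, 1 ≤ k → H k = !![stmt5al k, stmt5be k; 0, stmt5de k] := by
    intro k hk
    rcases eq_or_lt_of_le hk with h1 | h2
    · subst h1
      rw [hH1]
      ext i j
      fin_cases i <;> fin_cases j <;>
        simp [stmt5al, stmt5be, stmt5de, Nat.factorial] <;> norm_num
    · have h2' : 2 ≤ k := h2
      have hk0 : (k : ℚ) ≠ 0 := by positivity
      have hkm1 : (k : ℚ) - 1 ≠ 0 := by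
        have : (2:ℚ) ≤ (k:ℚ) := by exact_mod_cast h2'
        intro h; nlinarith
      have fB : (Nat.factorial (k + 1 + 1) : ℚ)
          = ((k : ℚ) + 2) * (Nat.factorial (k + 1) : ℚ) := by
        rw [Nat.factorial_succ]; push_cast; ring
      have fC : (Nat.factorial (k + 2) : ℚ)
          = ((k : ℚ) + 2) * (Nat.factorial (k + 1) : ℚ) := by
        rw [show k + 2 = (k + 1) + 1 from rfl, Nat.factorial_succ]; push_cast; ring
      rw [hH k h2', hc (k + 1) (by omega), hc k h2']
      refine stmt5_mat2 ?_ ?_ rfl ?_ <;>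
        · simp only [stmt5al, stmt5be, stmt5de]
          push_cast
          try simp only [fB, fC]
          field_simp
          try ring
          all_goals rw [← mul_pow, mul_inv_cancel₀ hk0, one_pow]
  -- the four scalar identities, by induction
  have key : ∀ k : ℕ, 1 ≤ k →
      Pv ((k:ℤ) - 1) = stmt5al k * Ph (4*(k:ℤ)-3) + stmt5be k * Ph (4*(k:ℤ)-2) ∧
      Qv ((k:ℤ) - 1) = stmt5al k * Qh (4*(k:ℤ)-3) + stmt5be k * Qh (4*(k:ℤ)-2) ∧
      Pv (k:ℤ) = stmt5de k * Ph (4*(k:ℤ)-2) ∧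
      Qv (k:ℤ) = stmt5de k * Qh (4*(k:ℤ)-2) := by
    intro k hk
    induction k, hk using Nat.le_induction with
    | base =>
      have p1 : Ph 1 = 5 := by
        have h := hPhrec 0 le_rfl; norm_num [hbh1, hah1, hPh0, hbh0, hPhm] at h; exact h
      have q1 : Qh 1 = 4 := by
        have h := hQhrec 0 le_rfl; norm_num [hbh1, hah1, hQh0, hQhm] at h; exact h
      have p2 : Ph 2 = 24 := by
        have h := hPhrec 1 (by norm_num)
        norm_num [hbh2, hah2, p1, hPh0, hbh0] at h; exact h
      have q2 : Qh 2 = 20 := by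
        have h := hQhrec 1 (by norm_num)
        norm_num [hbh2, hah2, q1, hQh0] at h; exact h
      have pv1 : Pv 1 = 6 := by
        have h := hPvrec 0 le_rfl; norm_num [hbv1, hav1, hPv0, hbv0, hPvm] at h; exact h
      have qv1 : Qv 1 = 5 := by
        have h := hQvrec 0 le_rfl; norm_num [hbv1, hav1, hQv0, hQvm] at h; exact h
      refine ⟨?_, ?_, ?_, ?_⟩ <;>
        norm_num [stmt5al, stmt5be, stmt5de, Nat.factorial, p1, p2, q1, q2, pv1, qv1,
          hPv0, hbv0, hQv0]
    | succ k hk ih =>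
      obtain ⟨ih1, ih2, ih3, ih4⟩ := ih
      have hk1 : (1:ℤ) ≤ (k:ℤ) := by exact_mod_cast hk
      obtain ⟨hb41, ha41, hb42, ha42⟩ := hh1 (k:ℤ) hk1
      obtain ⟨hb3, ha3, hb4, ha4⟩ := hh2 ((k:ℤ) - 1) (by omega)
      obtain ⟨hbv', hav'⟩ := hv (k:ℤ) hk1
      rw [show 4*((k:ℤ)-1)+3 = 4*(k:ℤ)-1 by ring] at hb3 ha3
      rw [show 4*((k:ℤ)-1)+4 = 4*(k:ℤ) by ring] at hb4 ha4
      push_cast at hb3 ha3 hb4 ha4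
      have rp3 := hPhrec (4*(k:ℤ)-2) (by omega)
      have rp4 := hPhrec (4*(k:ℤ)-1) (by omega)
      have rp5 := hPhrec (4*(k:ℤ)) (by omega)
      have rp6 := hPhrec (4*(k:ℤ)+1) (by omega)
      have rq3 := hQhrec (4*(k:ℤ)-2) (by omega)
      have rq4 := hQhrec (4*(k:ℤ)-1) (by omega)
      have rq5 := hQhrec (4*(k:ℤ)) (by omega)
      have rq6 := hQhrec (4*(k:ℤ)+1) (by omega)
      rw [show 4*(k:ℤ)-2+1 = 4*(k:ℤ)-1 by ring, show 4*(k:ℤ)-2-1 = 4*(k:ℤ)-3 by ring]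
        at rp3 rq3
      rw [show 4*(k:ℤ)-1+1 = 4*(k:ℤ) by ring, show 4*(k:ℤ)-1-1 = 4*(k:ℤ)-2 by ring]
        at rp4 rq4
      rw [show 4*(k:ℤ)+1+1 = 4*(k:ℤ)+2 by ring, show 4*(k:ℤ)+1-1 = 4*(k:ℤ) by ring]
        at rp6 rq6
      have rv := hPvrec (k:ℤ) (by omega)
      have rw' := hQvrec (k:ℤ) (by omega)
      have fA : (Nat.factorial (k + 1 + 1) : ℚ)
          = ((k : ℚ) + 2) * (Nat.factorial (k + 1) : ℚ) := by
        rw [Nat.factorial_succ]; push_cast; ring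
      have fC : (Nat.factorial (k + 2) : ℚ)
          = ((k : ℚ) + 2) * (Nat.factorial (k + 1) : ℚ) := by
        rw [show k + 2 = (k + 1) + 1 from rfl, Nat.factorial_succ]; push_cast; ring
      have fB : (Nat.factorial (k + 1 + 2) : ℚ)
          = ((k : ℚ) + 3) * ((k : ℚ) + 2) * (Nat.factorial (k + 1) : ℚ) := by
        rw [show k + 1 + 2 = (k + 2) + 1 from rfl, Nat.factorial_succ]; push_cast [fC]; ring
      have hk0 : (k : ℚ) ≠ 0 := by positivity
      have hk1' : (k : ℚ) + 1 ≠ 0 := by positivity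
      have hk2' : (k : ℚ) + 2 ≠ 0 := by positivity
      have hk3' : (k : ℚ) + 3 ≠ 0 := by positivity
      have hF := hfac (k + 1)
      push_cast
      rw [show (k:ℤ)+1-1 = (k:ℤ) by ring, show 4*((k:ℤ)+1)-3 = 4*(k:ℤ)+1 by ring,
        show 4*((k:ℤ)+1)-2 = 4*(k:ℤ)+2 by ring]
      refine ⟨?_, ?_, ?_, ?_⟩
      · simp only [ih3, rp6, rp5, rp4, rp3, hb42, ha42, hb41, ha41, hb4, ha4, hb3, ha3,
          stmt5al, stmt5be, stmt5de]
        push_cast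
        simp only [fA, fB, fC]
        field_simp
        ring
      · simp only [ih4, rq6, rq5, rq4, rq3, hb42, ha42, hb41, ha41, hb4, ha4, hb3, ha3,
          stmt5al, stmt5be, stmt5de]
        push_cast
        simp only [fA, fB, fC]
        field_simp
        ring
      · simp only [rv, hbv', hav', ih3, ih1, rp6, rp5, rp4, rp3, hb42, ha42, hb41, ha41,
          hb4, ha4, hb3, ha3, stmt5al, stmt5be, stmt5de]
        push_cast
        simp only [fA, fC]
        field_simp
        ring
      · simp only [rw', hbv', hav', ih4, ih2, rq6, rq5, rq4, rq3, hb42, ha42, hb41, ha41,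
          hb4, ha4, hb3, ha3, stmt5al, stmt5be, stmt5de]
        push_cast
        simp only [fA, fC]
        field_simp
        ring
  intro k hk
  obtain ⟨e1, e2, e3, e4⟩ := key k hk
  rw [hHk k hk, Matrix.mul_fin_two]
  apply stmt5_mat2
  · exact e1
  · exact e2
  · rw [e3]; ring
  · rw [e4]; ring
end

section
/- For every integer k ≥ 2, P^∨_k = P^∧_{4k−2}/(2·(k+1)!) and Q^∨_k = Q^∧_{4k−2}/(2·(k+1)!). -/
/-- Four-step contraction of the hat recurrence. -/
lemma hat_contract (ah bh x : ℤ → ℚ)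
    (hh1 : ∀ k : ℤ, 1 ≤ k →
      bh (4 * k + 1) = 2 * (k : ℚ) + 2 ∧ ah (4 * k + 1) = (k : ℚ) * ((k : ℚ) + 1) ∧
      bh (4 * k + 2) = 2 * (k : ℚ) + 4 ∧ ah (4 * k + 2) = ((k : ℚ) + 1) * ((k : ℚ) + 2))
    (hh2 : ∀ k : ℤ, 0 ≤ k →
      bh (4 * k + 3) = 2 * (k : ℚ) + 3 ∧ ah (4 * k + 3) = ((k : ℚ) + 1) ^ 2 ∧
      bh (4 * k + 4) = 2 * (k : ℚ) + 2 ∧ ah (4 * k + 4) = ((k : ℚ) + 2) ^ 2)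
    (hrec : ∀ ν : ℤ, 0 ≤ ν → x (ν + 1) = bh (ν + 1) * x ν + ah (ν + 1) * x (ν - 1))
    (k : ℤ) (hk : 2 ≤ k) :
    x (4 * k + 2) = ((k : ℚ) + 2) * (34 * (k : ℚ) ^ 3 + 51 * (k : ℚ) ^ 2 + 27 * (k : ℚ) + 5)
        * x (4 * k - 2)
      - (k : ℚ) ^ 6 * ((k : ℚ) + 1) * ((k : ℚ) + 2) * x (4 * k - 6) := by
  obtain ⟨eb1, ea1, eb2, ea2⟩ := hh1 k (by linarith)
  obtain ⟨ebm1, eam1, eb0, ea0⟩ := hh2 (k - 1) (by linarith)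
  rw [show 4 * (k - 1) + 3 = 4 * k - 1 by ring] at ebm1 eam1
  rw [show 4 * (k - 1) + 4 = 4 * k by ring] at eb0 ea0
  obtain ⟨ebm3, eam3, ebm2, eam2⟩ := hh1 (k - 1) (by linarith)
  rw [show 4 * (k - 1) + 1 = 4 * k - 3 by ring] at ebm3 eam3
  rw [show 4 * (k - 1) + 2 = 4 * k - 2 by ring] at ebm2 eam2
  obtain ⟨ebm5, eam5, ebm4, eam4⟩ := hh2 (k - 2) (by linarith)
  rw [show 4 * (k - 2) + 3 = 4 * k - 5 by ring] at ebm5 eam5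
  rw [show 4 * (k - 2) + 4 = 4 * k - 4 by ring] at ebm4 eam4
  push_cast at ebm1 eam1 eb0 ea0 ebm2 eam2 ebm3 eam3 ebm4 eam4 ebm5 eam5
  have s5 := hrec (4 * k - 6) (by linarith)
  rw [show 4 * k - 6 + 1 = 4 * k - 5 by ring, show 4 * k - 6 - 1 = 4 * k - 7 by ring] at s5
  have s4 := hrec (4 * k - 5) (by linarith)
  rw [show 4 * k - 5 + 1 = 4 * k - 4 by ring, show 4 * k - 5 - 1 = 4 * k - 6 by ring] at s4
  have s3 := hrec (4 * k - 4) (by linarith)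
  rw [show 4 * k - 4 + 1 = 4 * k - 3 by ring, show 4 * k - 4 - 1 = 4 * k - 5 by ring] at s3
  have s2 := hrec (4 * k - 3) (by linarith)
  rw [show 4 * k - 3 + 1 = 4 * k - 2 by ring, show 4 * k - 3 - 1 = 4 * k - 4 by ring] at s2
  have s1 := hrec (4 * k - 2) (by linarith)
  rw [show 4 * k - 2 + 1 = 4 * k - 1 by ring, show 4 * k - 2 - 1 = 4 * k - 3 by ring] at s1
  have s0 := hrec (4 * k - 1) (by linarith)
  rw [show 4 * k - 1 + 1 = 4 * k by ring, show 4 * k - 1 - 1 = 4 * k - 2 by ring] at s0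
  have sp1 := hrec (4 * k) (by linarith)
  have sp2 := hrec (4 * k + 1) (by linarith)
  rw [show 4 * k + 1 + 1 = 4 * k + 2 by ring, show 4 * k + 1 - 1 = 4 * k by ring] at sp2
  have f5 : x (4 * k - 5) = (2 * (k : ℚ) - 1) * x (4 * k - 6)
      + ((k : ℚ) ^ 2 - 2 * (k : ℚ) + 1) * x (4 * k - 7) := by
    rw [s5, ebm5, eam5]; ring
  have f4 : x (4 * k - 4) = (5 * (k : ℚ) ^ 2 - 6 * (k : ℚ) + 2) * x (4 * k - 6)
      + (2 * (k : ℚ) ^ 3 - 6 * (k : ℚ) ^ 2 + 6 * (k : ℚ) - 2) * x (4 * k - 7) := by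
    rw [s4, ebm4, eam4, f5]; ring
  have f3 : x (4 * k - 3) = (12 * (k : ℚ) ^ 3 - 15 * (k : ℚ) ^ 2 + 5 * (k : ℚ)) * x (4 * k - 6)
      + (5 * (k : ℚ) ^ 4 - 15 * (k : ℚ) ^ 3 + 15 * (k : ℚ) ^ 2 - 5 * (k : ℚ)) * x (4 * k - 7) := by
    rw [s3, ebm3, eam3, f4, f5]; ring
  have f2 : x (4 * k - 2) = (29 * (k : ℚ) ^ 4 - 7 * (k : ℚ) ^ 3 - 24 * (k : ℚ) ^ 2 + 12 * (k : ℚ)) * x (4 * k - 6)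
      + (12 * (k : ℚ) ^ 5 - 24 * (k : ℚ) ^ 4 + 24 * (k : ℚ) ^ 2 - 12 * (k : ℚ)) * x (4 * k - 7) := by
    rw [s2, ebm2, eam2, f3, f4]; ring
  have f1 : x (4 * k - 1) = (70 * (k : ℚ) ^ 5 - 50 * (k : ℚ) ^ 3 + 12 * (k : ℚ)) * x (4 * k - 6)
      + (29 * (k : ℚ) ^ 6 - 51 * (k : ℚ) ^ 5 - 9 * (k : ℚ) ^ 4 + 43 * (k : ℚ) ^ 3 - 12 * (k : ℚ)) * x (4 * k - 7) := by
    rw [s1, ebm1, eam1, f2, f3]; ring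
  have f0 : x (4 * k) = (169 * (k : ℚ) ^ 6 + 51 * (k : ℚ) ^ 5 - 109 * (k : ℚ) ^ 4 - 43 * (k : ℚ) ^ 3 + 24 * (k : ℚ) ^ 2 + 12 * (k : ℚ)) * x (4 * k - 6)
      + (70 * (k : ℚ) ^ 7 - 102 * (k : ℚ) ^ 6 - 54 * (k : ℚ) ^ 5 + 86 * (k : ℚ) ^ 4 + 36 * (k : ℚ) ^ 3 - 24 * (k : ℚ) ^ 2 - 12 * (k : ℚ)) * x (4 * k - 7) := by
    rw [s0, eb0, ea0, f1, f2]; ring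
  have g1 : x (4 * k + 1) = (408 * (k : ℚ) ^ 7 + 510 * (k : ℚ) ^ 6 - 166 * (k : ℚ) ^ 5 - 354 * (k : ℚ) ^ 4 - 26 * (k : ℚ) ^ 3 + 84 * (k : ℚ) ^ 2 + 24 * (k : ℚ)) * x (4 * k - 6)
      + (169 * (k : ℚ) ^ 8 - 86 * (k : ℚ) ^ 7 - 372 * (k : ℚ) ^ 6 + 98 * (k : ℚ) ^ 5 + 287 * (k : ℚ) ^ 4 + 12 * (k : ℚ) ^ 3 - 84 * (k : ℚ) ^ 2 - 24 * (k : ℚ)) * x (4 * k - 7) := by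
    rw [sp1, eb1, ea1, f0, f1]; ring
  have g2 : x (4 * k + 2) = (985 * (k : ℚ) ^ 8 + 3210 * (k : ℚ) ^ 7 + 2090 * (k : ℚ) ^ 6 - 1640 * (k : ℚ) ^ 5 - 1791 * (k : ℚ) ^ 4 + 62 * (k : ℚ) ^ 3 + 468 * (k : ℚ) ^ 2 + 120 * (k : ℚ)) * x (4 * k - 6)
      + (408 * (k : ℚ) ^ 9 + 612 * (k : ℚ) ^ 8 - 1308 * (k : ℚ) ^ 7 - 1572 * (k : ℚ) ^ 6 + 1152 * (k : ℚ) ^ 5 + 1428 * (k : ℚ) ^ 4 - 132 * (k : ℚ) ^ 3 - 468 * (k : ℚ) ^ 2 - 120 * (k : ℚ)) * x (4 * k - 7) := by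
    rw [sp2, eb2, ea2, g1, f0]; ring
  rw [g2, f2]; ring

/-- For every `k ≥ 2`, `P^∨_k = P^∧_{4k−2}/(2(k+1)!)` and `Q^∨_k = Q^∧_{4k−2}/(2(k+1)!)`,
where `P^∧, Q^∧` (resp. `P^∨, Q^∨`) are the convergent numerators and denominators of the
continued fractions with coefficients `a^∧, b^∧` (resp. `a^∨, b^∨`). -/
theorem stmt_6
    (ah bh Ph Qh : ℤ → ℚ)
    (hbh0 : bh 0 = 1) (hah1 : ah 1 = 1) (hbh1 : bh 1 = 4) (hah2 : ah 2 = 4) (hbh2 : bh 2 = 4)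
    (hh1 : ∀ k : ℤ, 1 ≤ k →
      bh (4 * k + 1) = 2 * (k : ℚ) + 2 ∧ ah (4 * k + 1) = (k : ℚ) * ((k : ℚ) + 1) ∧
      bh (4 * k + 2) = 2 * (k : ℚ) + 4 ∧ ah (4 * k + 2) = ((k : ℚ) + 1) * ((k : ℚ) + 2))
    (hh2 : ∀ k : ℤ, 0 ≤ k →
      bh (4 * k + 3) = 2 * (k : ℚ) + 3 ∧ ah (4 * k + 3) = ((k : ℚ) + 1) ^ 2 ∧
      bh (4 * k + 4) = 2 * (k : ℚ) + 2 ∧ ah (4 * k + 4) = ((k : ℚ) + 2) ^ 2)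
    (hPhm : Ph (-1) = 1) (hQhm : Qh (-1) = 0) (hPh0 : Ph 0 = bh 0) (hQh0 : Qh 0 = 1)
    (hPhrec : ∀ ν : ℤ, 0 ≤ ν → Ph (ν + 1) = bh (ν + 1) * Ph ν + ah (ν + 1) * Ph (ν - 1))
    (hQhrec : ∀ ν : ℤ, 0 ≤ ν → Qh (ν + 1) = bh (ν + 1) * Qh ν + ah (ν + 1) * Qh (ν - 1))
    (av bv Pv Qv : ℤ → ℚ)
    (hbv0 : bv 0 = 0) (hbv1 : bv 1 = 5) (hav1 : av 1 = 6)
    (hv : ∀ ν : ℤ, 1 ≤ ν →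
      bv (ν + 1) = 34 * (ν : ℚ) ^ 3 + 51 * (ν : ℚ) ^ 2 + 27 * (ν : ℚ) + 5 ∧
      av (ν + 1) = -(ν : ℚ) ^ 6)
    (hPvm : Pv (-1) = 1) (hQvm : Qv (-1) = 0) (hPv0 : Pv 0 = bv 0) (hQv0 : Qv 0 = 1)
    (hPvrec : ∀ ν : ℤ, 0 ≤ ν → Pv (ν + 1) = bv (ν + 1) * Pv ν + av (ν + 1) * Pv (ν - 1))
    (hQvrec : ∀ ν : ℤ, 0 ≤ ν → Qv (ν + 1) = bv (ν + 1) * Qv ν + av (ν + 1) * Qv (ν - 1)) :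
    ∀ k : ℕ, 2 ≤ k →
      Pv (k : ℤ) = Ph (4 * (k : ℤ) - 2) / (2 * (Nat.factorial (k + 1) : ℚ)) ∧
      Qv (k : ℤ) = Qh (4 * (k : ℤ) - 2) / (2 * (Nat.factorial (k + 1) : ℚ)) := by
  -- coefficient values at small indices
  have b3a3 := hh2 0 le_rfl
  have b5a5 := hh1 1 le_rfl
  have b7a7 := hh2 1 (by norm_num)
  have b9a9 := hh1 2 (by norm_num)
  norm_num at b3a3 b5a5 b7a7 b9a9
  obtain ⟨hb3, ha3, hb4, ha4⟩ := b3a3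
  obtain ⟨hb5, ha5, hb6, ha6⟩ := b5a5
  obtain ⟨hb7, ha7, hb8, ha8⟩ := b7a7
  obtain ⟨hb9, ha9, hb10, ha10⟩ := b9a9
  have hPh0' : Ph 0 = 1 := by rw [hPh0, hbh0]
  -- hat values
  have p1 : Ph 1 = 5 := by
    have h := hPhrec 0 le_rfl; norm_num [hbh1, hah1, hPh0', hPhm] at h; exact h
  have q1 : Qh 1 = 4 := by
    have h := hQhrec 0 le_rfl; norm_num [hbh1, hah1, hQh0, hQhm] at h; exact h
  have p2 : Ph 2 = 24 := by
    have h := hPhrec 1 (by norm_num); norm_num [hbh2, hah2, p1, hPh0'] at h; exact h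
  have q2 : Qh 2 = 20 := by
    have h := hQhrec 1 (by norm_num); norm_num [hbh2, hah2, q1, hQh0] at h; exact h
  have p3 : Ph 3 = 77 := by
    have h := hPhrec 2 (by norm_num); norm_num [hb3, ha3, p2, p1] at h; exact h
  have q3 : Qh 3 = 64 := by
    have h := hQhrec 2 (by norm_num); norm_num [hb3, ha3, q2, q1] at h; exact h
  have p4 : Ph 4 = 250 := by
    have h := hPhrec 3 (by norm_num); norm_num [hb4, ha4, p3, p2] at h; exact h
  have q4 : Qh 4 = 208 := by
    have h := hQhrec 3 (by norm_num); norm_num [hb4, ha4, q3, q2] at h; exact h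
  have p5 : Ph 5 = 1154 := by
    have h := hPhrec 4 (by norm_num); norm_num [hb5, ha5, p4, p3] at h; exact h
  have q5 : Qh 5 = 960 := by
    have h := hQhrec 4 (by norm_num); norm_num [hb5, ha5, q4, q3] at h; exact h
  have p6 : Ph 6 = 8424 := by
    have h := hPhrec 5 (by norm_num); norm_num [hb6, ha6, p5, p4] at h; exact h
  have q6 : Qh 6 = 7008 := by
    have h := hQhrec 5 (by norm_num); norm_num [hb6, ha6, q5, q4] at h; exact h
  have p7 : Ph 7 = 46736 := by
    have h := hPhrec 6 (by norm_num); norm_num [hb7, ha7, p6, p5] at h; exact h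
  have q7 : Qh 7 = 38880 := by
    have h := hQhrec 6 (by norm_num); norm_num [hb7, ha7, q6, q5] at h; exact h
  have p8 : Ph 8 = 262760 := by
    have h := hPhrec 7 (by norm_num); norm_num [hb8, ha8, p7, p6] at h; exact h
  have q8 : Qh 8 = 218592 := by
    have h := hQhrec 7 (by norm_num); norm_num [hb8, ha8, q7, q6] at h; exact h
  have p9 : Ph 9 = 1856976 := by
    have h := hPhrec 8 (by norm_num); norm_num [hb9, ha9, p8, p7] at h; exact h
  have q9 : Qh 9 = 1544832 := by
    have h := hQhrec 8 (by norm_num); norm_num [hb9, ha9, q8, q7] at h; exact h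
  have p10 : Ph 10 = 18008928 := by
    have h := hPhrec 9 (by norm_num); norm_num [hb10, ha10, p9, p8] at h; exact h
  have q10 : Qh 10 = 14981760 := by
    have h := hQhrec 9 (by norm_num); norm_num [hb10, ha10, q9, q8] at h; exact h
  -- vee values
  have hbv2av2 := hv 1 le_rfl
  have hbv3av3 := hv 2 (by norm_num)
  norm_num at hbv2av2 hbv3av3
  obtain ⟨hbv2, hav2⟩ := hbv2av2
  obtain ⟨hbv3, hav3⟩ := hbv3av3
  have hPv0' : Pv 0 = 0 := by rw [hPv0, hbv0]
  have pv1 : Pv 1 = 6 := by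
    have h := hPvrec 0 le_rfl; norm_num [hbv1, hav1, hPv0', hPvm] at h; exact h
  have qv1 : Qv 1 = 5 := by
    have h := hQvrec 0 le_rfl; norm_num [hbv1, hav1, hQv0, hQvm] at h; exact h
  have pv2 : Pv 2 = 702 := by
    have h := hPvrec 1 (by norm_num); norm_num [hbv2, hav2, pv1, hPv0'] at h; exact h
  have qv2 : Qv 2 = 584 := by
    have h := hQvrec 1 (by norm_num); norm_num [hbv2, hav2, qv1, hQv0] at h; exact h
  have pv3 : Pv 3 = 375186 := by
    have h := hPvrec 2 (by norm_num); norm_num [hbv3, hav3, pv2, pv1] at h; exact h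
  have qv3 : Qv 3 = 312120 := by
    have h := hQvrec 2 (by norm_num); norm_num [hbv3, hav3, qv2, qv1] at h; exact h
  -- the statement
  set S : ℕ → Prop := fun k =>
    Pv (k : ℤ) = Ph (4 * (k : ℤ) - 2) / (2 * (Nat.factorial (k + 1) : ℚ)) ∧
    Qv (k : ℤ) = Qh (4 * (k : ℤ) - 2) / (2 * (Nat.factorial (k + 1) : ℚ)) with hS
  have main : ∀ n : ℕ, 2 ≤ n → S n ∧ S (n + 1) := by
    intro n hn
    induction n, hn using Nat.le_induction with
    | base =>
      constructor
      · constructor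
        · show Pv ((2 : ℕ) : ℤ) = Ph (4 * ((2 : ℕ) : ℤ) - 2) / _
          norm_num [Nat.factorial, pv2, p6]
        · show Qv ((2 : ℕ) : ℤ) = Qh (4 * ((2 : ℕ) : ℤ) - 2) / _
          norm_num [Nat.factorial, qv2, q6]
      · constructor
        · show Pv ((3 : ℕ) : ℤ) = Ph (4 * ((3 : ℕ) : ℤ) - 2) / _
          norm_num [Nat.factorial, pv3, p10]
        · show Qv ((3 : ℕ) : ℤ) = Qh (4 * ((3 : ℕ) : ℤ) - 2) / _
          norm_num [Nat.factorial, qv3, q10]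
    | succ n hn ih =>
      refine ⟨ih.2, ?_⟩
      obtain ⟨⟨ihp1, ihq1⟩, ihp2, ihq2⟩ := ih
      have hfac : ((n + 1).factorial : ℚ) ≠ 0 := by
        exact_mod_cast (Nat.factorial_pos (n + 1)).ne'
      have hcoef := hv ((n : ℤ) + 1) (by omega)
      push_cast at hcoef
      obtain ⟨hbvv, havv⟩ := hcoef
      have hkey : ∀ x : ℤ → ℚ,
          (∀ ν : ℤ, 0 ≤ ν → x (ν + 1) = bh (ν + 1) * x ν + ah (ν + 1) * x (ν - 1)) →
          x (4 * ((n : ℤ) + 1) + 2) =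
            (((n : ℤ) + 1 : ℚ) + 2) * (34 * ((n : ℤ) + 1 : ℚ) ^ 3 + 51 * ((n : ℤ) + 1 : ℚ) ^ 2
              + 27 * ((n : ℤ) + 1 : ℚ) + 5) * x (4 * ((n : ℤ) + 1) - 2)
            - ((n : ℤ) + 1 : ℚ) ^ 6 * (((n : ℤ) + 1 : ℚ) + 1) * (((n : ℤ) + 1 : ℚ) + 2)
              * x (4 * ((n : ℤ) + 1) - 6) := by
        intro x hx
        have := hat_contract ah bh x hh1 hh2 hx ((n : ℤ) + 1) (by
          have : (2 : ℤ) ≤ (n : ℤ) := by exact_mod_cast hn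
          linarith)
        push_cast at this ⊢
        convert this using 2
      constructor
      · -- P part
        have hrecv := hPvrec ((n : ℤ) + 1) (by omega)
        rw [show (n : ℤ) + 1 - 1 = (n : ℤ) by ring] at hrecv
        push_cast at ihp1 ihp2
        rw [hbvv, havv, ihp1, ihp2] at hrecv
        have hk := hkey Ph hPhrec
        show Pv ((n + 1 + 1 : ℕ) : ℤ) = Ph (4 * ((n + 1 + 1 : ℕ) : ℤ) - 2)
          / (2 * ((n + 1 + 1 + 1).factorial : ℚ))
        push_cast
        rw [show (4 * ((n : ℤ) + 1 + 1) - 2) = 4 * ((n : ℤ) + 1) + 2 by ring]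
        rw [hk, show (4 * ((n : ℤ) + 1) - 6) = 4 * (n : ℤ) - 2 by ring]
        rw [hrecv]
        simp only [Nat.factorial_succ]
        push_cast
        field_simp
        ring
      · -- Q part
        have hrecv := hQvrec ((n : ℤ) + 1) (by omega)
        rw [show (n : ℤ) + 1 - 1 = (n : ℤ) by ring] at hrecv
        push_cast at ihq1 ihq2
        rw [hbvv, havv, ihq1, ihq2] at hrecv
        have hk := hkey Qh hQhrec
        show Qv ((n + 1 + 1 : ℕ) : ℤ) = Qh (4 * ((n + 1 + 1 : ℕ) : ℤ) - 2)
          / (2 * ((n + 1 + 1 + 1).factorial : ℚ))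
        push_cast
        rw [show (4 * ((n : ℤ) + 1 + 1) - 2) = 4 * ((n : ℤ) + 1) + 2 by ring]
        rw [hk, show (4 * ((n : ℤ) + 1) - 6) = 4 * (n : ℤ) - 2 by ring]
        rw [hrecv]
        simp only [Nat.factorial_succ]
        push_cast
        field_simp
        ring
  exact fun k hk => (main k hk).1
end

section
/- For every integer ν ≥ 0, P^∨_ν = (ν!)³ · v_ν and Q^∨_ν = (ν!)³ · u_ν, where u, v are the Apéry sequences. -/
/-- For every `ν ≥ 0`, `P^∨_ν = (ν!)³ v_ν` and `Q^∨_ν = (ν!)³ u_ν`, where `u, v` are the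
Apéry sequences and `P^∨, Q^∨` are the convergents of the continued fraction with
coefficients `a^∨, b^∨`. -/
theorem stmt_7
    (av bv Pv Qv : ℤ → ℚ)
    (hbv0 : bv 0 = 0) (hbv1 : bv 1 = 5) (hav1 : av 1 = 6)
    (hv : ∀ ν : ℤ, 1 ≤ ν →
      bv (ν + 1) = 34 * (ν : ℚ) ^ 3 + 51 * (ν : ℚ) ^ 2 + 27 * (ν : ℚ) + 5 ∧
      av (ν + 1) = -(ν : ℚ) ^ 6)
    (hPvm : Pv (-1) = 1) (hQvm : Qv (-1) = 0) (hPv0 : Pv 0 = bv 0) (hQv0 : Qv 0 = 1)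
    (hPvrec : ∀ ν : ℤ, 0 ≤ ν → Pv (ν + 1) = bv (ν + 1) * Pv ν + av (ν + 1) * Pv (ν - 1))
    (hQvrec : ∀ ν : ℤ, 0 ≤ ν → Qv (ν + 1) = bv (ν + 1) * Qv ν + av (ν + 1) * Qv (ν - 1))
    -- the Apéry sequences u, v
    (u v : ℕ → ℚ)
    (hu0 : u 0 = 1) (hu1 : u 1 = 5) (hv0 : v 0 = 0) (hv1 : v 1 = 6)
    (hurec : ∀ ν : ℕ, 1 ≤ ν →
      ((ν : ℚ) + 1) ^ 3 * u (ν + 1) -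
        (34 * (ν : ℚ) ^ 3 + 51 * (ν : ℚ) ^ 2 + 27 * (ν : ℚ) + 5) * u ν +
        (ν : ℚ) ^ 3 * u (ν - 1) = 0)
    (hvrec : ∀ ν : ℕ, 1 ≤ ν →
      ((ν : ℚ) + 1) ^ 3 * v (ν + 1) -
        (34 * (ν : ℚ) ^ 3 + 51 * (ν : ℚ) ^ 2 + 27 * (ν : ℚ) + 5) * v ν +
        (ν : ℚ) ^ 3 * v (ν - 1) = 0) :
    ∀ ν : ℕ, Pv (ν : ℤ) = (Nat.factorial ν : ℚ) ^ 3 * v ν ∧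
      Qv (ν : ℤ) = (Nat.factorial ν : ℚ) ^ 3 * u ν := by

  suffices h : ∀ ν : ℕ,
      (Pv (ν : ℤ) = (Nat.factorial ν : ℚ) ^ 3 * v ν ∧
        Qv (ν : ℤ) = (Nat.factorial ν : ℚ) ^ 3 * u ν) ∧
      (Pv ((ν : ℤ) + 1) = (Nat.factorial (ν + 1) : ℚ) ^ 3 * v (ν + 1) ∧
        Qv ((ν : ℤ) + 1) = (Nat.factorial (ν + 1) : ℚ) ^ 3 * u (ν + 1)) by
    intro ν
    exact (h ν).1
  intro ν
  induction ν with
  | zero =>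
    have hP1 := hPvrec 0 le_rfl
    have hQ1 := hQvrec 0 le_rfl
    norm_num [hbv0, hbv1, hav1, hPvm, hQvm, hPv0, hQv0, hv0, hu0, hv1, hu1,
      Nat.factorial] at hP1 hQ1 ⊢
    exact ⟨hP1, hQ1⟩
  | succ n ih =>
    obtain ⟨⟨hPn, hQn⟩, hPn1, hQn1⟩ := ih
    obtain ⟨hb, ha⟩ := hv ((n : ℤ) + 1) (by omega)
    push_cast at hb ha
    have hF2 : ((Nat.factorial (n + 1 + 1) : ℚ)) = ((n : ℚ) + 2) * (Nat.factorial (n + 1) : ℚ) := by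
      rw [Nat.factorial_succ]; push_cast; ring
    have hF1 : ((Nat.factorial (n + 1) : ℚ)) = ((n : ℚ) + 1) * (Nat.factorial n : ℚ) := by
      rw [Nat.factorial_succ]; push_cast; ring
    have hsimp : (n : ℤ) + 1 - 1 = (n : ℤ) := by ring
    refine ⟨⟨by push_cast; exact hPn1, by push_cast; exact hQn1⟩, ?_, ?_⟩
    · have hrec := hPvrec ((n : ℤ) + 1) (by omega)
      have hr := hvrec (n + 1) (by omega)
      simp only [Nat.add_sub_cancel] at hr
      push_cast at hr hrec ⊢
      rw [hsimp] at hrec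
      rw [hrec, hb, ha, hPn1, hPn, hF2, hF1]
      linear_combination (-((n : ℚ) + 1) ^ 3 * (Nat.factorial n : ℚ) ^ 3) * hr
    · have hrec := hQvrec ((n : ℤ) + 1) (by omega)
      have hr := hurec (n + 1) (by omega)
      simp only [Nat.add_sub_cancel] at hr
      push_cast at hr hrec ⊢
      rw [hsimp] at hrec
      rw [hrec, hb, ha, hQn1, hQn, hF2, hF1]
      linear_combination (-((n : ℚ) + 1) ^ 3 * (Nat.factorial n : ℚ) ^ 3) * hr
end

section
/- For every integer k ≥ 2, P^∧_{4k−2} = 2(k+1)(k!)⁴ · v_k and Q^∧_{4k−2} = 2(k+1)(k!)⁴ · u_k, where u, v are the Apéry sequences. -/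
/-- For every `k ≥ 2`, `P^∧_{4k−2} = 2(k+1)(k!)⁴ v_k` and `Q^∧_{4k−2} = 2(k+1)(k!)⁴ u_k`,
where `u, v` are the Apéry sequences and `P^∧, Q^∧` are the convergents of Nesterenko's
continued fraction. -/
theorem stmt_8
    (ah bh Ph Qh : ℤ → ℚ)
    (hbh0 : bh 0 = 1) (hah1 : ah 1 = 1) (hbh1 : bh 1 = 4) (hah2 : ah 2 = 4) (hbh2 : bh 2 = 4)
    (hh1 : ∀ k : ℤ, 1 ≤ k →
      bh (4 * k + 1) = 2 * (k : ℚ) + 2 ∧ ah (4 * k + 1) = (k : ℚ) * ((k : ℚ) + 1) ∧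
      bh (4 * k + 2) = 2 * (k : ℚ) + 4 ∧ ah (4 * k + 2) = ((k : ℚ) + 1) * ((k : ℚ) + 2))
    (hh2 : ∀ k : ℤ, 0 ≤ k →
      bh (4 * k + 3) = 2 * (k : ℚ) + 3 ∧ ah (4 * k + 3) = ((k : ℚ) + 1) ^ 2 ∧
      bh (4 * k + 4) = 2 * (k : ℚ) + 2 ∧ ah (4 * k + 4) = ((k : ℚ) + 2) ^ 2)
    (hPhm : Ph (-1) = 1) (hQhm : Qh (-1) = 0) (hPh0 : Ph 0 = 1) (hQh0 : Qh 0 = 1)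
    (hPhrec : ∀ ν : ℤ, 0 ≤ ν → Ph (ν + 1) = bh (ν + 1) * Ph ν + ah (ν + 1) * Ph (ν - 1))
    (hQhrec : ∀ ν : ℤ, 0 ≤ ν → Qh (ν + 1) = bh (ν + 1) * Qh ν + ah (ν + 1) * Qh (ν - 1))
    -- the Apéry sequences u, v
    (u v : ℕ → ℚ)
    (hu0 : u 0 = 1) (hu1 : u 1 = 5) (hv0 : v 0 = 0) (hv1 : v 1 = 6)
    (hurec : ∀ ν : ℕ, 1 ≤ ν →
      ((ν : ℚ) + 1) ^ 3 * u (ν + 1) -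
        (34 * (ν : ℚ) ^ 3 + 51 * (ν : ℚ) ^ 2 + 27 * (ν : ℚ) + 5) * u ν +
        (ν : ℚ) ^ 3 * u (ν - 1) = 0)
    (hvrec : ∀ ν : ℕ, 1 ≤ ν →
      ((ν : ℚ) + 1) ^ 3 * v (ν + 1) -
        (34 * (ν : ℚ) ^ 3 + 51 * (ν : ℚ) ^ 2 + 27 * (ν : ℚ) + 5) * v ν +
        (ν : ℚ) ^ 3 * v (ν - 1) = 0) :
    ∀ k : ℕ, 2 ≤ k →
      Ph (4 * (k : ℤ) - 2) = 2 * ((k : ℚ) + 1) * (Nat.factorial k : ℚ) ^ 4 * v k ∧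
      Qh (4 * (k : ℤ) - 2) = 2 * ((k : ℚ) + 1) * (Nat.factorial k : ℚ) ^ 4 * u k := by
  -- small values of u, v
  have hv2 : v 2 = 351/4 := by
    have h := hvrec 1 le_rfl
    norm_num [hv0, hv1] at h
    linarith
  have hu2 : u 2 = 73 := by
    have h := hurec 1 le_rfl
    norm_num [hu0, hu1] at h
    linarith
  -- small coefficients
  obtain ⟨hb3, ha3, hb4, ha4⟩ := hh2 0 le_rfl
  norm_num at hb3 ha3 hb4 ha4
  obtain ⟨hb5, ha5, hb6, ha6⟩ := hh1 1 le_rfl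
  norm_num at hb5 ha5 hb6 ha6
  -- small values of Ph, Qh
  have hP1 : Ph 1 = 5 := by
    have h := hPhrec 0 le_rfl; norm_num [hPh0, hPhm, hbh1, hah1] at h; exact h
  have hP2 : Ph 2 = 24 := by
    have h := hPhrec 1 (by norm_num); norm_num [hP1, hPh0, hbh2, hah2] at h; exact h
  have hP3 : Ph 3 = 77 := by
    have h := hPhrec 2 (by norm_num); norm_num [hP2, hP1, hb3, ha3] at h; exact h
  have hP4 : Ph 4 = 250 := by
    have h := hPhrec 3 (by norm_num); norm_num [hP3, hP2, hb4, ha4] at h; exact h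
  have hP5 : Ph 5 = 1154 := by
    have h := hPhrec 4 (by norm_num); norm_num [hP4, hP3, hb5, ha5] at h; exact h
  have hP6 : Ph 6 = 8424 := by
    have h := hPhrec 5 (by norm_num); norm_num [hP5, hP4, hb6, ha6] at h; exact h
  have hQ1 : Qh 1 = 4 := by
    have h := hQhrec 0 le_rfl; norm_num [hQh0, hQhm, hbh1, hah1] at h; exact h
  have hQ2 : Qh 2 = 20 := by
    have h := hQhrec 1 (by norm_num); norm_num [hQ1, hQh0, hbh2, hah2] at h; exact h
  have hQ3 : Qh 3 = 64 := by
    have h := hQhrec 2 (by norm_num); norm_num [hQ2, hQ1, hb3, ha3] at h; exact h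
  have hQ4 : Qh 4 = 208 := by
    have h := hQhrec 3 (by norm_num); norm_num [hQ3, hQ2, hb4, ha4] at h; exact h
  have hQ5 : Qh 5 = 960 := by
    have h := hQhrec 4 (by norm_num); norm_num [hQ4, hQ3, hb5, ha5] at h; exact h
  have hQ6 : Qh 6 = 7008 := by
    have h := hQhrec 5 (by norm_num); norm_num [hQ5, hQ4, hb6, ha6] at h; exact h
  have key : ∀ m : ℕ, 2 ≤ m →
      Ph (4 * (m : ℤ) - 3) = (Nat.factorial m : ℚ) ^ 4 * (5 * v m - v (m - 1)) / 6 ∧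
      Ph (4 * (m : ℤ) - 2) = 2 * ((m : ℚ) + 1) * (Nat.factorial m : ℚ) ^ 4 * v m ∧
      Qh (4 * (m : ℤ) - 3) = (Nat.factorial m : ℚ) ^ 4 * (5 * u m - u (m - 1)) / 6 ∧
      Qh (4 * (m : ℤ) - 2) = 2 * ((m : ℚ) + 1) * (Nat.factorial m : ℚ) ^ 4 * u m := by
    intro m hm
    induction m, hm using Nat.le_induction with
    | base =>
      refine ⟨?_, ?_, ?_, ?_⟩
      · rw [show (4 * ((2:ℕ) : ℤ) - 3) = 5 by norm_num, hP5]
        norm_num [hv2, hv1, Nat.factorial]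
      · rw [show (4 * ((2:ℕ) : ℤ) - 2) = 6 by norm_num, hP6]
        norm_num [hv2, Nat.factorial]
      · rw [show (4 * ((2:ℕ) : ℤ) - 3) = 5 by norm_num, hQ5]
        norm_num [hu2, hu1, Nat.factorial]
      · rw [show (4 * ((2:ℕ) : ℤ) - 2) = 6 by norm_num, hQ6]
        norm_num [hu2, Nat.factorial]
    | succ n hn ih =>
      obtain ⟨ihP3, ihP2, ihQ3, ihQ2⟩ := ih
      -- coefficients
      obtain ⟨hb1, ha1, hb0, ha0⟩ := hh2 ((n : ℤ) - 1) (by omega)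
      rw [show 4 * ((n : ℤ) - 1) + 3 = 4 * (n : ℤ) - 1 by ring] at hb1 ha1
      rw [show 4 * ((n : ℤ) - 1) + 4 = 4 * (n : ℤ) by ring] at hb0 ha0
      push_cast at hb1 ha1 hb0 ha0
      obtain ⟨hbp1, hap1, hbp2, hap2⟩ := hh1 (n : ℤ) (by omega)
      push_cast at hbp1 hap1 hbp2 hap2
      -- recurrences
      have r1 := hPhrec (4 * (n : ℤ) - 2) (by omega)
      have r2 := hPhrec (4 * (n : ℤ) - 1) (by omega)
      have r3 := hPhrec (4 * (n : ℤ)) (by omega)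
      have r4 := hPhrec (4 * (n : ℤ) + 1) (by omega)
      have s1 := hQhrec (4 * (n : ℤ) - 2) (by omega)
      have s2 := hQhrec (4 * (n : ℤ) - 1) (by omega)
      have s3 := hQhrec (4 * (n : ℤ)) (by omega)
      have s4 := hQhrec (4 * (n : ℤ) + 1) (by omega)
      rw [show 4 * (n : ℤ) - 2 + 1 = 4 * (n : ℤ) - 1 by ring,
        show 4 * (n : ℤ) - 2 - 1 = 4 * (n : ℤ) - 3 by ring] at r1 s1
      rw [show 4 * (n : ℤ) - 1 + 1 = 4 * (n : ℤ) by ring,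
        show 4 * (n : ℤ) - 1 - 1 = 4 * (n : ℤ) - 2 by ring] at r2 s2
      rw [show 4 * (n : ℤ) + 1 + 1 = 4 * (n : ℤ) + 2 by ring,
        show 4 * (n : ℤ) + 1 - 1 = 4 * (n : ℤ) by ring] at r4 s4
      have av := hvrec n (by omega)
      have au := hurec n (by omega)
      have hP41 : Ph (4 * (n : ℤ) + 1)
          = (((n : ℚ) + 1) * (Nat.factorial n : ℚ)) ^ 4 * (5 * v (n + 1) - v n) / 6 := by
        rw [r3, r2, r1, ihP3, ihP2, hb1, ha1, hb0, ha0, hbp1, hap1]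
        linear_combination (-5 * ((n : ℚ) + 1) * (Nat.factorial n : ℚ) ^ 4 / 6) * av
      have hP42 : Ph (4 * (n : ℤ) + 2)
          = 2 * ((n : ℚ) + 2) * (((n : ℚ) + 1) * (Nat.factorial n : ℚ)) ^ 4 * v (n + 1) := by
        rw [r4, r3, r2, r1, ihP3, ihP2, hb1, ha1, hb0, ha0, hbp1, hap1, hbp2, hap2]
        linear_combination (-2 * ((n : ℚ) + 2) * ((n : ℚ) + 1) * (Nat.factorial n : ℚ) ^ 4) * av
      have hQ41 : Qh (4 * (n : ℤ) + 1)
          = (((n : ℚ) + 1) * (Nat.factorial n : ℚ)) ^ 4 * (5 * u (n + 1) - u n) / 6 := by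
        rw [s3, s2, s1, ihQ3, ihQ2, hb1, ha1, hb0, ha0, hbp1, hap1]
        linear_combination (-5 * ((n : ℚ) + 1) * (Nat.factorial n : ℚ) ^ 4 / 6) * au
      have hQ42 : Qh (4 * (n : ℤ) + 2)
          = 2 * ((n : ℚ) + 2) * (((n : ℚ) + 1) * (Nat.factorial n : ℚ)) ^ 4 * u (n + 1) := by
        rw [s4, s3, s2, s1, ihQ3, ihQ2, hb1, ha1, hb0, ha0, hbp1, hap1, hbp2, hap2]
        linear_combination (-2 * ((n : ℚ) + 2) * ((n : ℚ) + 1) * (Nat.factorial n : ℚ) ^ 4) * au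
      refine ⟨?_, ?_, ?_, ?_⟩
      · rw [show (4 * ((n + 1 : ℕ) : ℤ) - 3) = 4 * (n : ℤ) + 1 by push_cast; ring, hP41,
          Nat.add_sub_cancel, Nat.factorial_succ]
        push_cast
        ring
      · rw [show (4 * ((n + 1 : ℕ) : ℤ) - 2) = 4 * (n : ℤ) + 2 by push_cast; ring, hP42,
          Nat.factorial_succ]
        push_cast
        ring
      · rw [show (4 * ((n + 1 : ℕ) : ℤ) - 3) = 4 * (n : ℤ) + 1 by push_cast; ring, hQ41,
          Nat.add_sub_cancel, Nat.factorial_succ]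
        push_cast
        ring
      · rw [show (4 * ((n + 1 : ℕ) : ℤ) - 2) = 4 * (n : ℤ) + 2 by push_cast; ring, hQ42,
          Nat.factorial_succ]
        push_cast
        ring
  intro k hk
  exact ⟨(key k hk).2.1, (key k hk).2.2.2⟩
end

section
/- For every integer k ≥ 2: ∏_{κ=1}^{4k−2} a^∧_κ = 2(k!)⁸(k+1)/k³, ∏_{κ=1}^{4k−1} a^∧_κ = 2(k!)⁸(k+1)/k, ∏_{κ=1}^{4k} a^∧_κ = 2(k!)⁸(k+1)³/k, and ∏_{κ=1}^{4k+1} a^∧_κ = 2(k!)⁸(k+1)⁴. -/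
lemma prod_step (a : ℕ → ℚ) (n : ℕ) :
    (∏ κ ∈ Finset.Icc 1 (n + 1), a κ) = (∏ κ ∈ Finset.Icc 1 n, a κ) * a (n + 1) :=
  Finset.prod_Icc_succ_top (Nat.succ_le_succ (Nat.zero_le n)) a

/-- For every `k ≥ 2`, the partial products of Nesterenko's coefficients `a^∧` satisfy
`∏_{κ=1}^{4k−2} a^∧_κ = 2(k!)⁸(k+1)/k³`, `∏_{κ=1}^{4k−1} a^∧_κ = 2(k!)⁸(k+1)/k`,
`∏_{κ=1}^{4k} a^∧_κ = 2(k!)⁸(k+1)³/k`, and `∏_{κ=1}^{4k+1} a^∧_κ = 2(k!)⁸(k+1)⁴`. -/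
theorem stmt_9 (a : ℕ → ℚ)
    (ha1 : a 1 = 1) (ha2 : a 2 = 4)
    (h1 : ∀ k : ℕ, 1 ≤ k →
      a (4 * k + 1) = (k : ℚ) * ((k : ℚ) + 1) ∧
      a (4 * k + 2) = ((k : ℚ) + 1) * ((k : ℚ) + 2))
    (h2 : ∀ k : ℕ,
      a (4 * k + 3) = ((k : ℚ) + 1) ^ 2 ∧ a (4 * k + 4) = ((k : ℚ) + 2) ^ 2) :
    ∀ k : ℕ, 2 ≤ k →
      (∏ κ ∈ Finset.Icc 1 (4 * k - 2), a κ) =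
        2 * (Nat.factorial k : ℚ) ^ 8 * ((k : ℚ) + 1) / (k : ℚ) ^ 3 ∧
      (∏ κ ∈ Finset.Icc 1 (4 * k - 1), a κ) =
        2 * (Nat.factorial k : ℚ) ^ 8 * ((k : ℚ) + 1) / (k : ℚ) ∧
      (∏ κ ∈ Finset.Icc 1 (4 * k), a κ) =
        2 * (Nat.factorial k : ℚ) ^ 8 * ((k : ℚ) + 1) ^ 3 / (k : ℚ) ∧
      (∏ κ ∈ Finset.Icc 1 (4 * k + 1), a κ) =
        2 * (Nat.factorial k : ℚ) ^ 8 * ((k : ℚ) + 1) ^ 4 := by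
  have Q : ∀ m : ℕ, 1 ≤ m →
      (∏ κ ∈ Finset.Icc 1 (4 * m + 1), a κ) =
        2 * (Nat.factorial m : ℚ) ^ 8 * ((m : ℚ) + 1) ^ 4 := by
    intro m hm
    induction m with
    | zero => omega
    | succ n ih =>
      rcases Nat.eq_or_lt_of_le hm with h | h
      · -- n + 1 = 1, i.e. n = 0
        have hn : n = 0 := by omega
        subst hn
        have e3 := (h2 0).1
        have e4 := (h2 0).2
        have e5 := (h1 1 le_rfl).1
        norm_num at e3 e4 e5
        show (∏ κ ∈ Finset.Icc 1 5, a κ) = _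
        rw [show (5:ℕ) = 4+1 from rfl, prod_step, show (4:ℕ) = 3+1 from rfl, prod_step,
          show (3:ℕ) = 2+1 from rfl, prod_step, show (2:ℕ) = 1+1 from rfl, prod_step,
          Finset.Icc_self, Finset.prod_singleton]
        rw [ha1, ha2, e3, e4, e5]
        norm_num [Nat.factorial]
      · have hn : 1 ≤ n := by omega
        have IH := ih hn
        have e2 := (h1 n hn).2
        have e3 := (h2 n).1
        have e4 := (h2 n).2
        have e5 := (h1 (n+1) (by omega)).1
        have key : 4 * (n + 1) + 1 = (4 * n + 1) + 1 + 1 + 1 + 1 := by ring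
        rw [key, prod_step, prod_step, prod_step, prod_step, IH]
        have r2 : 4 * n + 1 + 1 = 4 * n + 2 := by ring
        have r3 : 4 * n + 1 + 1 + 1 = 4 * n + 3 := by ring
        have r4 : 4 * n + 1 + 1 + 1 + 1 = 4 * n + 4 := by ring
        have r5 : 4 * n + 1 + 1 + 1 + 1 + 1 = 4 * (n + 1) + 1 := by ring
        rw [r2, r3, r4, r5, e2, e3, e4, e5, Nat.factorial_succ]
        push_cast
        ring
  intro k hk
  obtain ⟨m, rfl⟩ : ∃ m, k = m + 1 := ⟨k - 1, by omega⟩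
  have hm : 1 ≤ m := by omega
  have IH := Q m hm
  have e2 := (h1 m hm).2
  have e3 := (h2 m).1
  have e4 := (h2 m).2
  have e5 := (h1 (m+1) (by omega)).1
  have hm0 : ((m:ℚ) + 1) ≠ 0 := by positivity
  have P2 : (∏ κ ∈ Finset.Icc 1 (4 * (m+1) - 2), a κ) =
      (∏ κ ∈ Finset.Icc 1 (4 * m + 1), a κ) * a (4 * m + 2) := by
    rw [show 4 * (m+1) - 2 = (4 * m + 1) + 1 by omega, prod_step]
  have P3 : (∏ κ ∈ Finset.Icc 1 (4 * (m+1) - 1), a κ) =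
      (∏ κ ∈ Finset.Icc 1 (4 * (m+1) - 2), a κ) * a (4 * m + 3) := by
    rw [show 4 * (m+1) - 1 = (4 * (m+1) - 2) + 1 by omega,
      show 4 * (m+1) - 2 + 1 = 4 * m + 3 by omega,
      show 4 * (m+1) - 2 = (4 * m + 2) by omega, ← prod_step]
  have P4 : (∏ κ ∈ Finset.Icc 1 (4 * (m+1)), a κ) =
      (∏ κ ∈ Finset.Icc 1 (4 * (m+1) - 1), a κ) * a (4 * m + 4) := by
    rw [show 4 * (m+1) - 1 = 4 * m + 3 by omega,
      show 4 * (m+1) = (4 * m + 3) + 1 by omega, prod_step]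
  have P5 : (∏ κ ∈ Finset.Icc 1 (4 * (m+1) + 1), a κ) =
      (∏ κ ∈ Finset.Icc 1 (4 * (m+1)), a κ) * a (4 * (m+1) + 1) := by
    rw [prod_step]
  rw [P2, IH, e2] at *
  refine ⟨?_, ?_, ?_, ?_⟩
  · rw [Nat.factorial_succ]; push_cast
    rw [eq_div_iff (by positivity : ((m:ℚ)+1)^3 ≠ 0)]; ring
  · rw [P3, e3, Nat.factorial_succ]; push_cast
    rw [eq_div_iff hm0]; ring
  · rw [P4, P3, e3, e4, Nat.factorial_succ]; push_cast
    rw [eq_div_iff hm0]; ring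
  · rw [P5, P4, P3, e3, e4, e5, Nat.factorial_succ]; push_cast; ring
end

section
/- Let α ≥ 1 and ν ≥ 0 be integers and let 0 ≤ k ≤ ν+α. Then ((ν+α)!/ν!)² · lim_{t→−k} ((t+k)·R(α,t,ν))² = C(ν+α, k)² · C(ν+k, k)², i.e., the coefficient of (t+k)^{−2} in the partial fraction decomposition of ((ν+α)!/ν!)² R(α,t,ν)² equals C(ν+α, k)² C(ν+k, k)². -/
open Finset

/-- The rational function `R(α,t,ν) = (∏_{j=1}^{ν}(t−j)) / (∏_{j=0}^{ν+α}(t+j))`. -/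
noncomputable def R (α : ℕ) (t : ℝ) (ν : ℕ) : ℝ :=
  (∏ j ∈ Finset.Icc 1 ν, (t - (j : ℝ))) / (∏ j ∈ Finset.Icc 0 (ν + α), (t + (j : ℝ)))


-- ∏_{j=1}^{b} (a+j) = (a+b)!/a!  (nat version, no division)
lemma prodA (a : ℕ) : ∀ b : ℕ, a.factorial * (∏ j ∈ Finset.Icc 1 b, (a + j)) = (a+b).factorial
  | 0 => by simp
  | b+1 => by
    rw [Finset.prod_Icc_succ_top (Nat.succ_le_succ (Nat.zero_le b)), ← mul_assoc, prodA a b,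
      ← Nat.add_assoc, Nat.factorial_succ, Nat.mul_comm]

lemma prodA' (a b : ℕ) : (∏ j ∈ Finset.Icc 1 b, ((a:ℝ) + j)) = (a+b).factorial / a.factorial := by
  have h := congrArg (fun n : ℕ => (n : ℝ)) (prodA a b)
  push_cast at h
  have := h
  field_simp at this ⊢
  linarith [this]

lemma prodShift (k : ℕ) : ∀ n : ℕ, (∏ j ∈ Finset.Icc (k+1) (k+n), ((j:ℝ) - k)) = n.factorial
  | 0 => by simp
  | n+1 => by
    rw [← Nat.add_assoc, Finset.prod_Icc_succ_top (by omega : k+1 ≤ k+n+1), prodShift k n,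
      Nat.factorial_succ]
    push_cast
    ring

lemma prodNegNat (k : ℕ) : (∏ j ∈ Finset.range k, (k - j)) = k.factorial := by
  have h : (∏ j ∈ Finset.range k, (k - j))
      = ∏ j ∈ Finset.range k, (k - 1 - j + 1) :=
    Finset.prod_congr rfl (fun j hj => by simp only [Finset.mem_range] at hj; omega)
  rw [h, Finset.prod_range_reflect (fun j => j + 1) k,
    Finset.prod_range_add_one_eq_factorial]

lemma prodNegOnePow {s : Finset ℕ} (f : ℕ → ℝ) :
    (∏ j ∈ s, -(f j)) = (-1)^s.card * ∏ j ∈ s, f j := by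
  calc (∏ j ∈ s, -(f j)) = ∏ j ∈ s, ((-1 : ℝ) * f j) := by simp
    _ = (∏ _j ∈ s, (-1 : ℝ)) * ∏ j ∈ s, f j := Finset.prod_mul_distrib
    _ = (-1)^s.card * ∏ j ∈ s, f j := by rw [Finset.prod_const]

lemma prodNeg (k : ℕ) : (∏ j ∈ Finset.range k, ((j:ℝ) - k)) = (-1)^k * k.factorial := by
  have : ∀ j ∈ Finset.range k, ((j:ℝ) - k) = -(((k - j : ℕ)):ℝ) := by
    intro j hj
    simp only [Finset.mem_range] at hj
    push_cast [Nat.cast_sub hj.le]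
    ring
  rw [Finset.prod_congr rfl this, prodNegOnePow _]
  rw [← Nat.cast_prod, prodNegNat]
  simp

/-- For integers `α ≥ 1`, `ν ≥ 0` and `0 ≤ k ≤ ν+α`, the coefficient of `(t+k)⁻²` in the
partial fraction expansion of `((ν+α)!/ν!)² R(α,t,ν)²`, i.e., the limit as `t → −k` of
`((ν+α)!/ν!)² ((t+k) R(α,t,ν))²`, equals `C(ν+α,k)² C(ν+k,k)²`. -/
theorem stmt_12 (α ν k : ℕ) (hα : 1 ≤ α) (hk : k ≤ ν + α) :
    Filter.Tendsto
      (fun t : ℝ =>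
        ((Nat.factorial (ν + α) : ℝ) / (Nat.factorial ν : ℝ)) ^ 2 *
          ((t + (k : ℝ)) * R α t ν) ^ 2)
      (nhdsWithin (-(k : ℝ)) {(-(k : ℝ))}ᶜ)
      (nhds ((Nat.choose (ν + α) k : ℝ) ^ 2 * (Nat.choose (ν + k) k : ℝ) ^ 2)) := by
  have hmem : k ∈ Finset.Icc 0 (ν+α) := by simp [hk]
  set c : ℝ := ((Nat.factorial (ν + α) : ℝ) / (Nat.factorial ν : ℝ)) with hc
  set N : ℝ → ℝ := fun t => ∏ j ∈ Finset.Icc 1 ν, (t - (j:ℝ)) with hN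
  set D : ℝ → ℝ := fun t => ∏ j ∈ (Finset.Icc 0 (ν+α)).erase k, (t + (j:ℝ)) with hD
  set g : ℝ → ℝ := fun t => c ^ 2 * (N t / D t) ^ 2 with hg
  -- equality on punctured nbhd
  have key : ∀ t : ℝ, t ≠ -(k:ℝ) →
      c ^ 2 * ((t + (k:ℝ)) * R α t ν) ^ 2 = g t := by
    intro t ht
    have ht' : t + (k:ℝ) ≠ 0 := fun h => ht (by linarith)
    have h1 : (∏ j ∈ Finset.Icc 0 (ν + α), (t + (j:ℝ))) = (t + k) * D t :=
      (Finset.mul_prod_erase _ _ hmem).symm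
    have : (t + (k:ℝ)) * R α t ν = N t / D t := by
      rw [R, h1, mul_div_assoc', mul_div_mul_left _ _ ht']
    rw [this]
  -- continuity of g at -k
  have hDk : D (-(k:ℝ)) ≠ 0 := by
    refine Finset.prod_ne_zero_iff.mpr ?_
    intro j hj
    rw [Finset.mem_erase] at hj
    have : (j : ℝ) ≠ (k : ℝ) := by exact_mod_cast hj.1
    intro h; apply this; linarith
  have hcont : ContinuousAt g (-(k:ℝ)) := by
    apply ContinuousAt.mul continuousAt_const
    apply ContinuousAt.pow
    exact ContinuousAt.div
      (Continuous.continuousAt (continuous_finset_prod _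
        (fun j _ => continuous_id.sub continuous_const)))
      (Continuous.continuousAt (continuous_finset_prod _
        (fun j _ => continuous_id.add continuous_const))) hDk
  -- values
  have hNval : N (-(k:ℝ)) = (-1)^ν * ((k+ν).factorial / k.factorial) := by
    rw [hN]
    have : ∀ j ∈ Finset.Icc 1 ν, (-(k:ℝ) - j) = -((k:ℝ) + j) := fun j _ => by ring
    simp only
    rw [Finset.prod_congr rfl this, prodNegOnePow _, prodA' k ν]
    simp [Nat.card_Icc]
  have hIcc : Finset.Icc 0 (ν+α) = Finset.range (ν+α+1) := by
    ext x; simp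
  have hsplit : (Finset.Icc 0 (ν+α)).erase k
      = Finset.range k ∪ Finset.Icc (k+1) (ν+α) := by
    rw [hIcc]; ext x; simp; omega
  have hdisj : Disjoint (Finset.range k) (Finset.Icc (k+1) (ν+α)) := by
    rw [Finset.disjoint_left]; intro x hx hx'; simp at hx hx'; omega
  have hDval : D (-(k:ℝ)) = (-1)^k * k.factorial * (ν+α-k).factorial := by
    rw [hD]
    simp only
    rw [hsplit, Finset.prod_union hdisj]
    have e1 : ∀ j : ℕ, (-(k:ℝ) + j) = (j:ℝ) - k := fun j => by ring
    simp only [e1]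
    rw [prodNeg k]
    have h2 : Finset.Icc (k+1) (ν+α) = Finset.Icc (k+1) (k+(ν+α-k)) := by
      congr 1; omega
    rw [h2, prodShift k (ν+α-k)]
  -- final value identity
  have hval : g (-(k:ℝ)) =
      (Nat.choose (ν + α) k : ℝ) ^ 2 * (Nat.choose (ν + k) k : ℝ) ^ 2 := by
    rw [hg]
    simp only
    rw [hNval, hDval, hc, Nat.cast_choose ℝ hk, Nat.cast_choose ℝ (Nat.le_add_left k ν),
      Nat.add_sub_cancel]
    have f0 : ∀ n : ℕ, (n.factorial : ℝ) ≠ 0 := fun n => by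
      exact_mod_cast n.factorial_ne_zero
    have hkν : (k + ν).factorial = (ν + k).factorial := by rw [Nat.add_comm]
    rw [hkν]
    field_simp
    ring_nf
    rw [show ((-1:ℝ))^(ν*2) = 1 by rw [mul_comm, pow_mul]; norm_num,
      show ((-1:ℝ))^(k*2) = 1 by rw [mul_comm, pow_mul]; norm_num]
  rw [← hval]
  refine Filter.Tendsto.congr' ?_ (hcont.tendsto.mono_left nhdsWithin_le_nhds)
  filter_upwards [self_mem_nhdsWithin] with t ht
  exact (key t ht).symm
end

section
/- Let α ≥ 1 and ν ≥ 0 be integers and let 0 ≤ k ≤ ν+α. Then ((ν+α)!/ν!)² · lim_{t→−k} (d/dt)((t+k)·R(α,t,ν))² = 2 · C(ν+α, k)² · C(ν+k, k)² · S_{1,k}(α,ν), i.e., the coefficient of (t+k)^{−1} in the partial fraction decomposition of ((ν+α)!/ν!)² R(α,t,ν)² equals 2 C(ν+α, k)² C(ν+k, k)² S_{1,k}(α,ν). -/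
open Polynomial Finset Nat Filter

private lemma aux_logderiv (c : ℕ → ℝ) (t : ℝ) : ∀ (s : Finset ℕ), (∀ i ∈ s, t + c i ≠ 0) →
    (Polynomial.derivative (∏ j ∈ s, (X + C (c j)))).eval t
      = (∏ j ∈ s, (t + c j)) * ∑ j ∈ s, (t + c j)⁻¹ := by
  intro s
  induction s using Finset.induction with
  | empty => simp
  | insert _ _ hns ih =>
    rename_i a s
    intro h
    have ha : t + c a ≠ 0 := h a (Finset.mem_insert_self a s)
    rw [Finset.prod_insert hns, derivative_mul]
    rw [Finset.prod_insert hns, Finset.sum_insert hns]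
    simp only [eval_add, eval_mul, derivative_add, derivative_X, derivative_C, eval_prod,
      eval_X, eval_C, eval_one, add_zero, one_mul]
    rw [ih (fun i hi => h i (Finset.mem_insert_of_mem hi))]
    field_simp

private lemma aux_prodfact (k : ℕ) : ∀ ν : ℕ, (∏ j ∈ Icc 1 ν, (k + j)) * k ! = (ν + k)! := by
  intro ν
  induction ν with
  | zero => simp
  | succ n ih =>
    rw [Finset.prod_Icc_succ_top (Nat.le_add_left 1 n), show n + 1 + k = (n + k) + 1 from by omega,
      Nat.factorial_succ, ← ih, show k + (n + 1) = n + k + 1 from by omega]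
    ring

private lemma aux_shift (k n : ℕ) (f : ℕ → ℝ) (hk : k ≤ n) :
    ∏ j ∈ Icc (k+1) n, f j = ∏ j ∈ Icc 1 (n-k), f (k + j) := by
  conv_lhs => rw [show n = k + (n - k) from by omega]
  rw [← Finset.map_add_left_Icc, Finset.prod_map]
  rfl

private lemma aux_shift_sum (k n : ℕ) (f : ℕ → ℝ) (hk : k ≤ n) :
    ∑ j ∈ Icc (k+1) n, f j = ∑ j ∈ Icc 1 (n-k), f (k + j) := by
  conv_lhs => rw [show n = k + (n - k) from by omega]
  rw [← Finset.map_add_left_Icc, Finset.sum_map]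
  rfl

private lemma aux_prod_id (n : ℕ) : (∏ x ∈ Icc 1 n, x) = n ! := by
  rw [← Finset.Ico_add_one_right_eq_Icc]
  exact Finset.prod_Ico_id_eq_factorial n

private lemma aux_reflect (k : ℕ) (f : ℕ → ℝ) :
    ∏ j ∈ Finset.range k, f j = ∏ κ ∈ Icc 1 k, f (k - κ) := by
  refine Finset.prod_nbij' (fun j => k - j) (fun κ => k - κ) ?_ ?_ ?_ ?_ ?_ <;> intros a ha <;>
    simp_all [Finset.mem_range, Finset.mem_Icc] <;> [omega; omega; omega; omega; (congr 1; omega)]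

private lemma aux_reflect_sum (k : ℕ) (f : ℕ → ℝ) :
    ∑ j ∈ Finset.range k, f j = ∑ κ ∈ Icc 1 k, f (k - κ) := by
  refine Finset.sum_nbij' (fun j => k - j) (fun κ => k - κ) ?_ ?_ ?_ ?_ ?_ <;> intros a ha <;>
    simp_all [Finset.mem_range, Finset.mem_Icc] <;> [omega; omega; omega; omega; (congr 1; omega)]

/-- `S_{1,k}(α,ν) = −∑_{κ=k+1}^{ν+k} 1/κ − ∑_{κ=1}^{ν+α−k} 1/κ + ∑_{κ=1}^{k} 1/κ`. -/
noncomputable def S1 (α ν k : ℕ) : ℝ :=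
  -(∑ κ ∈ Finset.Icc (k + 1) (ν + k), 1 / (κ : ℝ)) -
    (∑ κ ∈ Finset.Icc 1 (ν + α - k), 1 / (κ : ℝ)) +
    ∑ κ ∈ Finset.Icc 1 k, 1 / (κ : ℝ)

/-- For integers `α ≥ 1`, `ν ≥ 0` and `0 ≤ k ≤ ν+α`, the coefficient of `(t+k)⁻¹` in the
partial fraction expansion of `((ν+α)!/ν!)² R(α,t,ν)²`, i.e., the limit as `t → −k` of
`((ν+α)!/ν!)² (d/dt)((t+k) R(α,t,ν))²`, equals `2 C(ν+α,k)² C(ν+k,k)² S_{1,k}(α,ν)`. -/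
theorem stmt_13 (α ν k : ℕ) (hα : 1 ≤ α) (hk : k ≤ ν + α) :
    Filter.Tendsto
      (fun t : ℝ =>
        ((Nat.factorial (ν + α) : ℝ) / (Nat.factorial ν : ℝ)) ^ 2 *
          deriv (fun s : ℝ => ((s + (k : ℝ)) * R α s ν) ^ 2) t)
      (nhdsWithin (-(k : ℝ)) {(-(k : ℝ))}ᶜ)
      (nhds (2 * (Nat.choose (ν + α) k : ℝ) ^ 2 * (Nat.choose (ν + k) k : ℝ) ^ 2 *
        S1 α ν k)) := by
  classical
  set t₀ : ℝ := -(k : ℝ) with ht₀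
  set p : Polynomial ℝ := ∏ j ∈ Icc 1 ν, (X + C (-(j : ℝ))) with hp
  set q : Polynomial ℝ := ∏ j ∈ (Icc 0 (ν + α)).erase k, (X + C ((j : ℝ))) with hq
  have hevp : ∀ t : ℝ, p.eval t = ∏ j ∈ Icc 1 ν, (t - (j : ℝ)) := by
    intro t; simp [hp, eval_prod, sub_eq_add_neg]
  have hevq : ∀ t : ℝ, q.eval t = ∏ j ∈ (Icc 0 (ν + α)).erase k, (t + (j : ℝ)) := by
    intro t; simp [hq, eval_prod]
  -- nonvanishing at t₀
  have hqne : q.eval t₀ ≠ 0 := by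
    rw [hevq]
    refine Finset.prod_ne_zero_iff.2 ?_
    intro j hj
    rcases Finset.mem_erase.1 hj with ⟨hjk, _⟩
    intro h0
    have : (j : ℝ) = (k : ℝ) := by linarith [h0]
    exact hjk (Nat.cast_injective this)
  have hpne : p.eval t₀ ≠ 0 := by
    rw [hevp]
    refine Finset.prod_ne_zero_iff.2 ?_
    intro j hj
    have hj1 : 1 ≤ j := (Finset.mem_Icc.1 hj).1
    have hjpos : (0:ℝ) < (j : ℝ) := by exact_mod_cast hj1
    have hkpos : (0:ℝ) ≤ (k : ℝ) := Nat.cast_nonneg k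
    intro h0
    have : t₀ = (j:ℝ) := by linarith [sub_eq_zero.1 h0]
    rw [ht₀] at this
    linarith
  -- splitting of the full denominator
  have hkmem : k ∈ Icc 0 (ν + α) := Finset.mem_Icc.2 ⟨Nat.zero_le k, hk⟩
  have hsplit : ∀ t : ℝ, (∏ j ∈ Icc 0 (ν + α), (t + (j : ℝ)))
      = (t + k) * q.eval t := by
    intro t
    rw [hevq, ← Finset.mul_prod_erase _ _ hkmem]
  -- the open set where q doesn't vanish
  have hqcont : Continuous fun t : ℝ => q.eval t := q.continuous
  have hUopen : IsOpen {t : ℝ | q.eval t ≠ 0} :=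
    isOpen_compl_singleton.preimage hqcont
  -- equality of the function with (p/q)^2 away from t₀ on U
  have hfun : ∀ s : ℝ, q.eval s ≠ 0 → s ≠ t₀ →
      ((s + (k : ℝ)) * R α s ν) ^ 2 = (p.eval s / q.eval s) ^ 2 := by
    intro s hqs hs
    have hsk : s + (k : ℝ) ≠ 0 := by
      intro h; exact hs (by linarith [h])
    have : R α s ν = p.eval s / ((s + k) * q.eval s) := by
      rw [R, hsplit s, hevp]
    rw [this, mul_div_assoc', mul_div_mul_left _ _ hsk]
  -- the derivative function F
  set F : ℝ → ℝ := fun t =>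
    2 * (p.eval t / q.eval t) *
      ((p.derivative.eval t * q.eval t - p.eval t * q.derivative.eval t) / q.eval t ^ 2)
    with hF
  have hderivF : ∀ t : ℝ, q.eval t ≠ 0 → t ≠ t₀ →
      deriv (fun s : ℝ => ((s + (k : ℝ)) * R α s ν) ^ 2) t = F t := by
    intro t hqt ht
    have hmem : {s : ℝ | q.eval s ≠ 0} ∩ {t₀}ᶜ ∈ nhds t :=
      (IsOpen.mem_nhds (hUopen.inter isOpen_compl_singleton) ⟨hqt, ht⟩)
    have heq : (fun s : ℝ => ((s + (k : ℝ)) * R α s ν) ^ 2)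
        =ᶠ[nhds t] fun s => (p.eval s / q.eval s) ^ 2 := by
      filter_upwards [hmem] with s hs
      exact hfun s hs.1 hs.2
    rw [Filter.EventuallyEq.deriv_eq heq]
    have h1 : HasDerivAt (fun s : ℝ => p.eval s / q.eval s)
        ((p.derivative.eval t * q.eval t - p.eval t * q.derivative.eval t) / q.eval t ^ 2) t :=
      (p.hasDerivAt t).div (q.hasDerivAt t) hqt
    have h2 := h1.fun_pow 2
    rw [h2.deriv]
    simp [hF]
    try ring
  -- continuity of F at t₀
  have hcont : ContinuousAt F t₀ := by
    have cp : Continuous fun t : ℝ => p.eval t := p.continuous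
    have cp' : Continuous fun t : ℝ => p.derivative.eval t := p.derivative.continuous
    have cq' : Continuous fun t : ℝ => q.derivative.eval t := q.derivative.continuous
    have hq2 : (q.eval t₀) ^ 2 ≠ 0 := pow_ne_zero _ hqne
    exact (((continuousAt_const.mul ((cp.continuousAt).div (hqcont.continuousAt) hqne))).mul
      (((cp'.continuousAt.mul hqcont.continuousAt).sub
        (cp.continuousAt.mul cq'.continuousAt)).div
        ((hqcont.continuousAt.pow 2)) hq2))
  -- the limit statement, with value F t₀
  have hmem₀ : {s : ℝ | q.eval s ≠ 0} ∩ {t₀}ᶜ ∈ nhdsWithin t₀ {t₀}ᶜ :=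
    Filter.inter_mem (mem_nhdsWithin_of_mem_nhds (hUopen.mem_nhds hqne)) self_mem_nhdsWithin
  have hT : Filter.Tendsto
      (fun t : ℝ =>
        ((Nat.factorial (ν + α) : ℝ) / (Nat.factorial ν : ℝ)) ^ 2 *
          deriv (fun s : ℝ => ((s + (k : ℝ)) * R α s ν) ^ 2) t)
      (nhdsWithin t₀ {t₀}ᶜ)
      (nhds (((Nat.factorial (ν + α) : ℝ) / (Nat.factorial ν : ℝ)) ^ 2 * F t₀)) := by
    have : Filter.Tendsto (fun t => ((Nat.factorial (ν + α) : ℝ) / (Nat.factorial ν : ℝ)) ^ 2 * F t)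
        (nhdsWithin t₀ {t₀}ᶜ)
        (nhds (((Nat.factorial (ν + α) : ℝ) / (Nat.factorial ν : ℝ)) ^ 2 * F t₀)) :=
      (hcont.tendsto.mono_left nhdsWithin_le_nhds).const_mul _
    refine this.congr' ?_
    filter_upwards [hmem₀] with t ht
    rw [hderivF t ht.1 ht.2]
  -- now compute F t₀ and conclude
  suffices hval : ((Nat.factorial (ν + α) : ℝ) / (Nat.factorial ν : ℝ)) ^ 2 * F t₀
      = 2 * (Nat.choose (ν + α) k : ℝ) ^ 2 * (Nat.choose (ν + k) k : ℝ) ^ 2 * S1 α ν k by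
    rw [← hval]; exact hT
  -- notation
  set P : ℝ := p.eval t₀ with hPdef
  set Q : ℝ := q.eval t₀ with hQdef
  -- nonvanishing of factors
  have hne1 : ∀ i ∈ Icc 1 ν, t₀ + -(i : ℝ) ≠ 0 := by
    intro i hi
    have hi1 : 1 ≤ i := (Finset.mem_Icc.1 hi).1
    have : (0:ℝ) < (i : ℝ) := by exact_mod_cast hi1
    have hkpos : (0:ℝ) ≤ (k : ℝ) := Nat.cast_nonneg k
    rw [ht₀]; intro h0; linarith [h0]
  have hne2 : ∀ i ∈ (Icc 0 (ν + α)).erase k, t₀ + (i : ℝ) ≠ 0 := by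
    intro i hi
    rcases Finset.mem_erase.1 hi with ⟨hik, _⟩
    rw [ht₀]; intro h0
    have : (i : ℝ) = (k : ℝ) := by linarith [h0]
    exact hik (Nat.cast_injective this)
  -- log derivatives
  set sg1 : ℝ := ∑ j ∈ Icc 1 ν, (t₀ + -(j : ℝ))⁻¹ with hsg1
  set sg2 : ℝ := ∑ j ∈ (Icc 0 (ν + α)).erase k, (t₀ + (j : ℝ))⁻¹ with hsg2
  have hdp : p.derivative.eval t₀ = P * sg1 := by
    rw [hp, aux_logderiv _ _ _ hne1, hsg1, hPdef, hevp]
    congr 1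
  have hdq : q.derivative.eval t₀ = Q * sg2 := by
    rw [hq, aux_logderiv _ _ _ hne2, hsg2, hQdef, hevq]
  -- F t₀ in closed form
  have hFval : F t₀ = 2 * (P / Q) ^ 2 * (sg1 - sg2) := by
    rw [hF]
    simp only [hdp, hdq, ← hPdef, ← hQdef]
    field_simp
  -- the splitting of the erase set
  have hsetsplit : (Icc 0 (ν + α)).erase k = Finset.range k ∪ Icc (k + 1) (ν + α) := by
    ext j
    simp only [Finset.mem_erase, Finset.mem_Icc, Finset.mem_union, Finset.mem_range]
    omega
  have hdisj : Disjoint (Finset.range k) (Icc (k + 1) (ν + α)) := by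
    rw [Finset.disjoint_left]
    intro j hj hj'
    simp only [Finset.mem_range] at hj
    simp only [Finset.mem_Icc] at hj'
    omega
  -- sums identification: sg1 - sg2 = S1
  have hS1a : sg1 = -(∑ κ ∈ Finset.Icc (k + 1) (ν + k), 1 / (κ : ℝ)) := by
    rw [hsg1, aux_shift_sum k (ν + k) (fun κ => 1 / (κ : ℝ)) (Nat.le_add_left k ν),
      Nat.add_sub_cancel, ← Finset.sum_neg_distrib]
    refine Finset.sum_congr rfl fun j hj => ?_
    rw [ht₀]
    push_cast
    rw [one_div, ← inv_neg]
    congr 1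
    ring
  have hS2a : sg2 = -(∑ κ ∈ Finset.Icc 1 k, 1 / (κ : ℝ))
      + ∑ κ ∈ Finset.Icc 1 (ν + α - k), 1 / (κ : ℝ) := by
    rw [hsg2, hsetsplit, Finset.sum_union hdisj]
    congr 1
    · rw [aux_reflect_sum k (fun j => (t₀ + (j : ℝ))⁻¹), ← Finset.sum_neg_distrib]
      refine Finset.sum_congr rfl fun κ hκ => ?_
      have hκk : κ ≤ k := (Finset.mem_Icc.1 hκ).2
      rw [ht₀, one_div, ← inv_neg]
      congr 1
      push_cast [Nat.cast_sub hκk]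
      ring
    · rw [aux_shift_sum k (ν + α) (fun j => (t₀ + (j : ℝ))⁻¹) hk]
      refine Finset.sum_congr rfl fun κ hκ => ?_
      rw [ht₀, one_div]
      congr 1
      push_cast
      ring
  have hS1eq : sg1 - sg2 = S1 α ν k := by
    rw [hS1a, hS2a, S1]
    ring
  -- values of P and Q
  have hPfact : P * (k ! : ℝ) = (-1 : ℝ) ^ ν * ((ν + k)! : ℝ) := by
    rw [hPdef, hevp]
    have h1 : ∀ j ∈ Icc 1 ν, t₀ - (j : ℝ) = (-1 : ℝ) * (((k + j : ℕ) : ℝ)) := by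
      intro j hj
      rw [ht₀]
      push_cast
      ring
    rw [Finset.prod_congr rfl h1, Finset.prod_mul_distrib, Finset.prod_const,
      Nat.card_Icc, Nat.add_sub_cancel, ← Nat.cast_prod, mul_assoc, ← Nat.cast_mul,
      aux_prodfact k ν]
  have hQfact : Q = (-1 : ℝ) ^ k * (k ! : ℝ) * ((ν + α - k)! : ℝ) := by
    rw [hQdef, hevq, hsetsplit, Finset.prod_union hdisj]
    have h1 : ∏ j ∈ Finset.range k, (t₀ + (j : ℝ)) = (-1 : ℝ) ^ k * (k ! : ℝ) := by
      rw [aux_reflect k (fun j => t₀ + (j : ℝ))]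
      have h2 : ∀ κ ∈ Icc 1 k, t₀ + ((k - κ : ℕ) : ℝ) = (-1 : ℝ) * ((κ : ℕ) : ℝ) := by
        intro κ hκ
        have hκk : κ ≤ k := (Finset.mem_Icc.1 hκ).2
        rw [ht₀]
        push_cast [Nat.cast_sub hκk]
        ring
      rw [Finset.prod_congr rfl h2, Finset.prod_mul_distrib, Finset.prod_const,
        Nat.card_Icc, Nat.add_sub_cancel, ← Nat.cast_prod, aux_prod_id]
    have h3 : ∏ j ∈ Icc (k + 1) (ν + α), (t₀ + (j : ℝ)) = ((ν + α - k)! : ℝ) := by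
      rw [aux_shift k (ν + α) (fun j => t₀ + (j : ℝ)) hk]
      have h4 : ∀ κ ∈ Icc 1 (ν + α - k), t₀ + ((k + κ : ℕ) : ℝ) = ((κ : ℕ) : ℝ) := by
        intro κ hκ
        rw [ht₀]
        push_cast
        ring
      rw [Finset.prod_congr rfl h4, ← Nat.cast_prod, aux_prod_id]
    rw [h1, h3]
  -- factorial nonzeroness
  have hfk : (k ! : ℝ) ≠ 0 := Nat.cast_ne_zero.2 (Nat.factorial_ne_zero k)
  have hfν : (ν ! : ℝ) ≠ 0 := Nat.cast_ne_zero.2 (Nat.factorial_ne_zero ν)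
  have hfak : ((ν + α - k)! : ℝ) ≠ 0 := Nat.cast_ne_zero.2 (Nat.factorial_ne_zero _)
  have hfνk : ((ν + k)! : ℝ) ≠ 0 := Nat.cast_ne_zero.2 (Nat.factorial_ne_zero _)
  have hfνα : ((ν + α)! : ℝ) ≠ 0 := Nat.cast_ne_zero.2 (Nat.factorial_ne_zero _)
  -- squared values
  have hsq1 : ((-1 : ℝ) ^ ν) ^ 2 = 1 := by
    rw [← pow_mul, mul_comm, pow_mul, neg_one_sq, one_pow]
  have hsq2 : ((-1 : ℝ) ^ k) ^ 2 = 1 := by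
    rw [← pow_mul, mul_comm, pow_mul, neg_one_sq, one_pow]
  have hP2 : P ^ 2 = ((ν + k)! : ℝ) ^ 2 / (k ! : ℝ) ^ 2 := by
    rw [eq_div_iff (pow_ne_zero _ hfk), ← mul_pow, hPfact, mul_pow, hsq1, one_mul]
  have hQ2 : Q ^ 2 = (k ! : ℝ) ^ 2 * ((ν + α - k)! : ℝ) ^ 2 := by
    rw [hQfact]
    rw [mul_pow, mul_pow, hsq2, one_mul]
  -- choose identities
  have hA : (((ν + α).choose k : ℕ) : ℝ) * (k ! : ℝ) * ((ν + α - k)! : ℝ) = ((ν + α)! : ℝ) := by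
    exact_mod_cast congrArg (Nat.cast : ℕ → ℝ) (Nat.choose_mul_factorial_mul_factorial hk)
  have hB : (((ν + k).choose k : ℕ) : ℝ) * (k ! : ℝ) * (ν ! : ℝ) = ((ν + k)! : ℝ) := by
    have := Nat.choose_mul_factorial_mul_factorial (Nat.le_add_left k ν)
    rw [Nat.add_sub_cancel] at this
    exact_mod_cast congrArg (Nat.cast : ℕ → ℝ) this
  -- final identity
  have hQne' : Q ≠ 0 := hqne
  have hsq : (((ν + α)! : ℝ) / (ν ! : ℝ)) ^ 2 * (P / Q) ^ 2
      = (((ν + α).choose k : ℕ) : ℝ) ^ 2 * (((ν + k).choose k : ℕ) : ℝ) ^ 2 := by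
    rw [div_pow, div_pow, hP2, hQ2]
    field_simp
    rw [← hA, ← hB]
    ring
  rw [hFval, hS1eq]
  calc (((ν + α)! : ℝ) / (ν ! : ℝ)) ^ 2 * (2 * (P / Q) ^ 2 * S1 α ν k)
      = (((ν + α)! : ℝ) / (ν ! : ℝ)) ^ 2 * (P / Q) ^ 2 * 2 * S1 α ν k := by ring
    _ = 2 * (((ν + α).choose k : ℕ) : ℝ) ^ 2 * (((ν + k).choose k : ℕ) : ℝ) ^ 2 * S1 α ν k := by
        rw [hsq]; ring
end

section
/- Let α ≥ 1 and ν ≥ 0 be integers and r ∈ {0, 1, 2}. Then ∑_{k=0}^{ν+α} ( 2 k^r · C(ν+α, k)² C(ν+k, k)² · S_{1,k}(α,ν) − r k^{r−1} · C(ν+α, k)² C(ν+k, k)² ) = 0, where the term r k^{r−1} is interpreted as 0 when r = 0. -/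
open Polynomial Finset Nat

namespace Stmt14Aux

/-- Finset version of derivative of a product. -/
theorem derivative_finset_prod {ι : Type*} [DecidableEq ι] (s : Finset ι) (f : ι → Polynomial ℝ) :
    derivative (∏ i ∈ s, f i) = ∑ i ∈ s, (∏ j ∈ s.erase i, f j) * derivative (f i) :=
  Polynomial.derivative_prod

section generic

variable {ι : Type*} [DecidableEq ι] (s : Finset ι) (c : ι → ℝ)

lemma monic_linprod : (∏ i ∈ s, (X - C (c i))).Monic :=
  monic_prod_of_monic _ _ fun _ _ => monic_X_sub_C _

lemma natDegree_linprod : (∏ i ∈ s, (X - C (c i))).natDegree = s.card := by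
  rw [natDegree_prod_of_monic _ _ fun _ _ => monic_X_sub_C _]
  simp

lemma eval_derivative_linprod (x : ℝ) (h : ∀ i ∈ s, x - c i ≠ 0) :
    (derivative (∏ i ∈ s, (X - C (c i)))).eval x =
      (∏ i ∈ s, (X - C (c i))).eval x * ∑ i ∈ s, (x - c i)⁻¹ := by
  rw [derivative_finset_prod, eval_finset_sum, Finset.mul_sum]
  refine Finset.sum_congr rfl fun i hi => ?_
  have hmul := Finset.mul_prod_erase s (fun j => x - c j) hi
  simp only [derivative_sub, derivative_X, derivative_C, sub_zero, eval_mul, eval_prod,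
    eval_one, mul_one, eval_sub, eval_X, eval_C]
  have hne := h i hi
  field_simp
  rw [mul_comm]
  simpa using hmul

end generic

noncomputable def Gp (ν : ℕ) : Polynomial ℝ := ∏ i ∈ range ν, (X - C (-((i : ℝ) + 1)))

noncomputable def Dp (n k : ℕ) : Polynomial ℝ :=
  ∏ j ∈ (range (n+1)).erase k, (X - C ((j : ℕ) : ℝ))

lemma eval_Gp (ν k : ℕ) : (Gp ν).eval (k : ℝ) = ((ν + k)! : ℝ) / (k ! : ℝ) := by
  have hk : (k ! : ℝ) ≠ 0 := by positivity
  induction ν with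
  | zero => simp [Gp, div_self hk]
  | succ ν ih =>
      rw [Gp, prod_range_succ, eval_mul, ← Gp, ih]
      have : ((ν + 1 + k)! : ℝ) = ((ν + k)! : ℝ) * ((ν : ℝ) + k + 1) := by
        have : (ν + 1 + k)! = (ν + k)! * (ν + k + 1) := by
          rw [show ν + 1 + k = (ν + k) + 1 by ring, Nat.factorial_succ]; ring
        rw [this]; push_cast; ring
      rw [this]
      simp only [eval_sub, eval_X, eval_C]
      ring

lemma eval_Gp_ne (ν k : ℕ) : (Gp ν).eval (k : ℝ) ≠ 0 := by
  rw [eval_Gp]; positivity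

lemma erase_range_eq {n k : ℕ} (hk : k ≤ n) :
    (range (n+1)).erase k = range k ∪ Ico (k+1) (n+1) := by
  ext j
  simp only [mem_erase, mem_range, mem_union, mem_Ico]
  omega

lemma disj_range_Ico {n k : ℕ} : Disjoint (range k) (Ico (k+1) (n+1)) := by
  rw [Finset.disjoint_left]
  intro a ha hb
  rw [mem_range] at ha
  rw [mem_Ico] at hb
  omega

lemma fact_prod (m : ℕ) : ((m ! : ℕ) : ℝ) = ∏ i ∈ range m, ((i : ℝ) + 1) := by
  induction m with
  | zero => simp
  | succ m ih => rw [prod_range_succ, ← ih, Nat.factorial_succ]; push_cast; ring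

lemma prod_left (k : ℕ) : (∏ j ∈ range k, ((k : ℝ) - (j : ℝ))) ^ 2 = ((k ! : ℕ) : ℝ) ^ 2 := by
  have h1 : ∏ j ∈ range k, ((k : ℝ) - (j : ℝ)) = ∏ j ∈ range k, ((j : ℝ) + 1) := by
    rw [← Finset.prod_range_reflect]
    refine Finset.prod_congr rfl fun j hj => ?_
    rw [mem_range] at hj
    have : ((k - 1 - j : ℕ) : ℝ) = (k : ℝ) - 1 - (j : ℝ) := by
      have : k - 1 - j = k - (1 + j) := by omega
      rw [this, Nat.cast_sub (by omega)]; push_cast; ring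
    rw [this]; ring
  rw [h1, ← fact_prod]

lemma prod_right {n k : ℕ} (hk : k ≤ n) :
    (∏ j ∈ Ico (k+1) (n+1), ((k : ℝ) - (j : ℝ))) ^ 2 = (((n - k)! : ℕ) : ℝ) ^ 2 := by
  rw [Finset.prod_Ico_eq_prod_range]
  have h1 : ∀ j ∈ range (n + 1 - (k+1)), ((k : ℝ) - ((k + 1 + j : ℕ) : ℝ)) = -((j:ℝ)+1) := by
    intro j _; push_cast; ring
  rw [Finset.prod_congr rfl h1, show n + 1 - (k+1) = n - k by omega]
  have h2 : (∏ x ∈ range (n-k), -((x:ℝ)+1)) = (-1)^(n-k) * ∏ x ∈ range (n-k), ((x:ℝ)+1) := by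
    rw [show ((-1:ℝ)^(n-k)) = ∏ _x ∈ range (n-k), (-1:ℝ) by
      rw [Finset.prod_const, Finset.card_range]]
    rw [← Finset.prod_mul_distrib]
    exact Finset.prod_congr rfl fun x _ => by ring
  rw [h2, ← fact_prod, mul_pow, ← pow_mul, mul_comm (n-k) 2, pow_mul]
  norm_num

lemma eval_Dp_sq {n k : ℕ} (hk : k ≤ n) :
    ((Dp n k).eval (k : ℝ)) ^ 2 = ((k ! : ℝ) * ((n - k)! : ℝ)) ^ 2 := by
  rw [Dp, eval_prod, erase_range_eq hk, Finset.prod_union disj_range_Ico]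
  simp only [eval_sub, eval_X, eval_C]
  rw [mul_pow, prod_left, prod_right hk, mul_pow]

lemma eval_Dp_ne {n k : ℕ} : (Dp n k).eval (k : ℝ) ≠ 0 := by
  rw [Dp, eval_prod]
  refine Finset.prod_ne_zero_iff.2 fun j hj => ?_
  rw [mem_erase] at hj
  simp only [eval_sub, eval_X, eval_C, sub_ne_zero]
  exact fun h => hj.1 (Nat.cast_injective h).symm

end Stmt14Aux

namespace Stmt14Aux

lemma sum_Icc_one (m : ℕ) (f : ℕ → ℝ) : ∑ κ ∈ Icc 1 m, f κ = ∑ i ∈ range m, f (i+1) := by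
  induction m with
  | zero => simp
  | succ m ih => rw [Finset.sum_Icc_succ_top (by omega), ih, Finset.sum_range_succ]

lemma sum_sig1 (ν k : ℕ) :
    ∑ i ∈ range ν, ((k : ℝ) + (i : ℝ) + 1)⁻¹ = ∑ κ ∈ Icc (k+1) (ν+k), 1 / (κ : ℝ) := by
  induction ν with
  | zero => simp
  | succ ν ih =>
      rw [Finset.sum_range_succ, ih, show ν + 1 + k = (ν + k) + 1 by ring,
        Finset.sum_Icc_succ_top (by omega)]
      push_cast
      rw [one_div, show ((k:ℝ) + ν + 1) = (ν:ℝ) + k + 1 by ring]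

lemma sum_sig' {n k : ℕ} (hk : k ≤ n) :
    ∑ j ∈ (range (n+1)).erase k, ((k : ℝ) - (j : ℝ))⁻¹ =
      (∑ κ ∈ Icc 1 k, 1 / (κ : ℝ)) - ∑ κ ∈ Icc 1 (n - k), 1 / (κ : ℝ) := by
  rw [erase_range_eq hk, Finset.sum_union disj_range_Ico]
  have h1 : ∑ j ∈ range k, ((k : ℝ) - (j : ℝ))⁻¹ = ∑ κ ∈ Icc 1 k, 1 / (κ : ℝ) := by
    rw [sum_Icc_one, ← Finset.sum_range_reflect]
    refine Finset.sum_congr rfl fun j hj => ?_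
    rw [mem_range] at hj
    have h2 : ((k - 1 - j : ℕ) : ℝ) = (k : ℝ) - 1 - (j : ℝ) := by
      have : k - 1 - j = k - (1 + j) := by omega
      rw [this, Nat.cast_sub (by omega)]; push_cast; ring
    rw [h2, one_div]
    push_cast
    ring_nf
  have h2 : ∑ j ∈ Ico (k+1) (n+1), ((k : ℝ) - (j : ℝ))⁻¹ =
      - ∑ κ ∈ Icc 1 (n - k), 1 / (κ : ℝ) := by
    rw [Finset.sum_Ico_eq_sum_range, show n + 1 - (k+1) = n - k by omega, sum_Icc_one,
      ← Finset.sum_neg_distrib]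
    refine Finset.sum_congr rfl fun j hj => ?_
    rw [one_div]
    push_cast
    rw [show (k : ℝ) - (k + 1 + j) = -((j:ℝ)+1) by ring]
    rw [inv_neg]
  rw [h1, h2]
  ring

end Stmt14Aux

namespace Stmt14Aux

noncomputable def fS (α ν r k : ℕ) : ℝ :=
  2 * (k : ℝ) ^ r * ((ν + α).choose k : ℝ) ^ 2 * ((ν + k).choose k : ℝ) ^ 2 * S1 α ν k -
    (r : ℝ) * (k : ℝ) ^ (r - 1) * ((ν + α).choose k : ℝ) ^ 2 * ((ν + k).choose k : ℝ) ^ 2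

noncomputable def Bc (α ν r k : ℕ) : ℝ := -((ν ! : ℝ) / ((ν + α)! : ℝ)) ^ 2 * fS α ν r k

noncomputable def Ac (α ν r k : ℕ) : ℝ :=
  (k : ℝ) ^ r * (((ν + k)! : ℝ) / (k ! : ℝ)) ^ 2 / ((k ! : ℝ) * ((ν + α - k)! : ℝ)) ^ 2

lemma scalar_core (α ν r k : ℕ) (hk : k ≤ ν + α) :
    (r : ℝ) * (k : ℝ) ^ (r - 1) * (((ν + k)! : ℝ) / (k ! : ℝ)) ^ 2 +
        (k : ℝ) ^ r * (2 * (((ν + k)! : ℝ) / (k ! : ℝ)) * ((((ν + k)! : ℝ) / (k ! : ℝ)) *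
          (∑ κ ∈ Icc (k + 1) (ν + k), 1 / (κ : ℝ)))) =
      Bc α ν r k * ((k ! : ℝ) * ((ν + α - k)! : ℝ)) ^ 2 +
        Ac α ν r k * (2 * ((k ! : ℝ) * ((ν + α - k)! : ℝ)) ^ 2 *
          ((∑ κ ∈ Icc 1 k, 1 / (κ : ℝ)) - ∑ κ ∈ Icc 1 (ν + α - k), 1 / (κ : ℝ))) := by
  unfold Bc Ac fS S1
  rw [Nat.cast_choose ℝ hk, Nat.cast_choose ℝ (Nat.le_add_left k ν)]
  rw [show ν + k - k = ν by omega]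
  have ha : (k ! : ℝ) ≠ 0 := by positivity
  have hb : (((ν + α - k)! : ℕ) : ℝ) ≠ 0 := by positivity
  have hd : ((ν ! : ℕ) : ℝ) ≠ 0 := by positivity
  have hN : (((ν + α)! : ℕ) : ℝ) ≠ 0 := by positivity
  field_simp
  ring

lemma eval_Dp_other {n j k : ℕ} (hk : k ≤ n) (hjk : j ≠ k) :
    (Dp n j).eval (k : ℝ) = 0 := by
  rw [Dp, eval_prod]
  refine Finset.prod_eq_zero (i := k) ?_ (by simp)
  rw [mem_erase]
  exact ⟨fun h => hjk h.symm, mem_range.2 (by omega)⟩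

lemma dvd_sq_of_eval (p : Polynomial ℝ) (a : ℝ) (h0 : p.eval a = 0)
    (h1 : (derivative p).eval a = 0) : (X - C a) ^ 2 ∣ p := by
  obtain ⟨q, hq⟩ := dvd_iff_isRoot.2 h0
  have hd : derivative p = q + (X - C a) * derivative q := by
    rw [hq, derivative_mul, derivative_sub, derivative_X, derivative_C]
    ring
  have hqa : q.eval a = 0 := by
    have := h1
    rw [hd] at this
    simpa using this
  obtain ⟨q', hq'⟩ := dvd_iff_isRoot.2 hqa
  exact ⟨q', by rw [hq, hq']; ring⟩

end Stmt14Aux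

namespace Stmt14Aux

lemma natDegree_Dp {n k : ℕ} (hk : k ≤ n) : (Dp n k).natDegree = n := by
  rw [Dp, natDegree_linprod, card_erase_of_mem (mem_range.2 (by omega)), card_range]
  omega

lemma monic_Dp (n k : ℕ) : (Dp n k).Monic := monic_linprod _ _

lemma keypoly (α ν r : ℕ) (hα : 1 ≤ α) (hr : r ≤ 2) :
    (X ^ r * (Gp ν) ^ 2 : Polynomial ℝ) =
      ∑ k ∈ range (ν + α + 1),
        (C (Ac α ν r k) + C (Bc α ν r k) * (X - C (k : ℝ))) * (Dp (ν + α) k) ^ 2 := by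
  set n := ν + α with hn
  rw [← sub_eq_zero]
  set Q : Polynomial ℝ := (X ^ r * (Gp ν) ^ 2 : Polynomial ℝ) -
      ∑ k ∈ range (n + 1),
        (C (Ac α ν r k) + C (Bc α ν r k) * (X - C (k : ℝ))) * (Dp n k) ^ 2 with hQdef
  -- evaluations of Q at the nodes
  have hQ0 : ∀ k, k ≤ n → Q.eval (k : ℝ) = 0 := by
    intro k hk
    rw [hQdef, eval_sub, eval_finset_sum]
    rw [Finset.sum_eq_single_of_mem k (mem_range.2 (by omega))
      (fun j _ hj => by simp [eval_Dp_other hk hj])]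
    have hAe : Ac α ν r k * (((Dp n k).eval (k : ℝ)) ^ 2) =
        (k : ℝ) ^ r * (((ν + k)! : ℝ) / (k ! : ℝ)) ^ 2 := by
      rw [eval_Dp_sq hk, Ac]
      have hnk : ν + α - k = n - k := by rw [hn]
      rw [hnk]
      have hb : ((k ! : ℝ) * ((n - k)! : ℝ)) ^ 2 ≠ 0 := by positivity
      field_simp
    simp only [eval_mul, eval_add, eval_pow, eval_sub, eval_X, eval_C, sub_self, mul_zero,
      add_zero, eval_Gp]
    rw [hAe]
    ring
  -- derivative evaluations
  have hQ1 : ∀ k, k ≤ n → (derivative Q).eval (k : ℝ) = 0 := by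
    intro k hk
    rw [hQdef, derivative_sub, derivative_sum, eval_sub, eval_finset_sum]
    -- the sum part
    have hsum : ∑ j ∈ range (n + 1),
        (derivative ((C (Ac α ν r j) + C (Bc α ν r j) * (X - C (j : ℝ))) * (Dp n j) ^ 2)).eval
          (k : ℝ) =
        Bc α ν r k * ((Dp n k).eval (k : ℝ)) ^ 2 +
          Ac α ν r k * (2 * ((Dp n k).eval (k : ℝ)) ^ 2 *
            ((∑ κ ∈ Icc 1 k, 1 / (κ : ℝ)) - ∑ κ ∈ Icc 1 (n - k), 1 / (κ : ℝ))) := by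
      rw [Finset.sum_eq_single_of_mem k (mem_range.2 (by omega))]
      · rw [derivative_mul, derivative_pow, derivative_add, derivative_C, derivative_mul,
          derivative_C, derivative_sub, derivative_X, derivative_C]
        have hDd : (derivative (Dp n k)).eval (k : ℝ) =
            (Dp n k).eval (k : ℝ) *
              ((∑ κ ∈ Icc 1 k, 1 / (κ : ℝ)) - ∑ κ ∈ Icc 1 (n - k), 1 / (κ : ℝ)) := by
          rw [Dp, eval_derivative_linprod _ _ _ (fun j hj => by
            rw [mem_erase] at hj
            rw [sub_ne_zero]
            exact fun h => hj.1 (Nat.cast_injective h).symm)]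
          rw [← Dp, ← sum_sig' hk]
        simp only [eval_add, eval_mul, eval_sub, eval_X, eval_C, eval_pow, eval_zero, eval_one,
          eval_natCast, show (2:ℕ) - 1 = 1 from rfl, pow_one]
        rw [hDd]
        push_cast
        ring
      · intro j _ hj
        rw [derivative_mul, derivative_pow]
        simp [eval_Dp_other hk hj]
    rw [hsum]
    -- the P part
    have hP' : (derivative (X ^ r * (Gp ν) ^ 2 : Polynomial ℝ)).eval (k : ℝ) =
        (r : ℝ) * (k : ℝ) ^ (r - 1) * (((ν + k)! : ℝ) / (k ! : ℝ)) ^ 2 +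
          (k : ℝ) ^ r * (2 * (((ν + k)! : ℝ) / (k ! : ℝ)) * ((((ν + k)! : ℝ) / (k ! : ℝ)) *
            (∑ κ ∈ Icc (k + 1) (ν + k), 1 / (κ : ℝ)))) := by
      rw [derivative_mul, derivative_X_pow, derivative_pow]
      have hG' : (derivative (Gp ν)).eval (k : ℝ) =
          (Gp ν).eval (k : ℝ) * ∑ κ ∈ Icc (k + 1) (ν + k), 1 / (κ : ℝ) := by
        rw [Gp, eval_derivative_linprod _ _ _ (fun i _ => by
          rw [sub_neg_eq_add]
          positivity)]
        rw [← Gp, ← sum_sig1]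
        congr 1
        exact Finset.sum_congr rfl fun i _ => by rw [sub_neg_eq_add]; ring_nf
      simp only [eval_add, eval_mul, eval_pow, eval_X, eval_C, eval_natCast, hG', eval_Gp]
      push_cast
      ring
    rw [hP', eval_Dp_sq hk, scalar_core α ν r k (by omega)]
    ring
  -- divisibility
  have hdvd : (∏ k ∈ range (n + 1), (X - C ((k : ℕ) : ℝ)) ^ 2) ∣ Q := by
    apply Finset.prod_dvd_of_coprime
    · intro a ha b hb hab
      have : IsCoprime (X - C ((a : ℕ) : ℝ)) (X - C ((b : ℕ) : ℝ)) := by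
        apply isCoprime_X_sub_C_of_isUnit_sub
        rw [isUnit_iff_ne_zero, sub_ne_zero]
        exact fun h => hab (Nat.cast_injective h)
      exact (this.pow : _)
    · intro k hk
      rw [mem_range] at hk
      exact dvd_sq_of_eval _ _ (hQ0 k (by omega)) (hQ1 k (by omega))
  -- degree bound
  by_contra hQne
  have hdeg1 : (∏ k ∈ range (n + 1), (X - C ((k : ℕ) : ℝ)) ^ 2).natDegree = 2 * (n + 1) := by
    rw [natDegree_prod_of_monic _ _ fun i _ => (monic_X_sub_C _).pow _]
    have h3 : ∀ i ∈ range (n+1), ((X - C ((i:ℕ):ℝ))^2).natDegree = 2 := fun i _ => by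
      rw [natDegree_pow, natDegree_X_sub_C]
    rw [Finset.sum_congr rfl h3, Finset.sum_const, card_range, smul_eq_mul]
    ring
  have hdegQ : Q.natDegree ≤ 2 * n + 1 := by
    apply le_trans (natDegree_sub_le _ _)
    rw [max_le_iff]
    constructor
    · apply le_trans (natDegree_mul_le)
      have h1 : (X ^ r : Polynomial ℝ).natDegree = r := natDegree_X_pow r
      have h2 : ((Gp ν) ^ 2 : Polynomial ℝ).natDegree = 2 * ν := by
        rw [natDegree_pow, Gp, natDegree_linprod, card_range]
      omega
    · apply natDegree_sum_le_of_forall_le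
      intro k hk
      rw [mem_range] at hk
      apply le_trans (natDegree_mul_le)
      have h2 : ((Dp n k) ^ 2).natDegree = 2 * n := by
        rw [natDegree_pow, natDegree_Dp (by omega)]
      have h1 : (C (Ac α ν r k) + C (Bc α ν r k) * (X - C (k : ℝ))).natDegree ≤ 1 := by
        apply le_trans (natDegree_add_le _ _)
        rw [max_le_iff]
        refine ⟨by simp, le_trans (natDegree_mul_le) ?_⟩
        simp only [natDegree_C, natDegree_X_sub_C]
        omega
      omega
  have := natDegree_le_of_dvd hdvd hQne
  omega

end Stmt14Aux

namespace Stmt14Aux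

lemma sum_Bc (α ν r : ℕ) (hα : 1 ≤ α) (hr : r ≤ 2) :
    ∑ k ∈ range (ν + α + 1), Bc α ν r k = 0 := by
  have hkey := keypoly α ν r hα hr
  set n := ν + α with hn
  have hc := congrArg (fun p : Polynomial ℝ => p.coeff (2*n+1)) hkey
  have hL : (X ^ r * (Gp ν)^2 : Polynomial ℝ).coeff (2*n+1) = 0 := by
    apply coeff_eq_zero_of_natDegree_lt
    have h0 := natDegree_mul_le (p := (X^r : Polynomial ℝ)) (q := (Gp ν)^2)
    have h2 : ((Gp ν)^2 : Polynomial ℝ).natDegree = 2*ν := by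
      rw [natDegree_pow, Gp, natDegree_linprod, card_range]
    have h1 : (X^r : Polynomial ℝ).natDegree = r := natDegree_X_pow r
    omega
  have hR : ∀ k ∈ range (n+1),
      (((C (Ac α ν r k) + C (Bc α ν r k) * (X - C ((k:ℕ):ℝ))) * (Dp n k)^2).coeff (2*n+1))
        = Bc α ν r k := by
    intro k hk
    rw [mem_range] at hk
    rw [add_mul, mul_assoc, coeff_add, coeff_C_mul, coeff_C_mul]
    have hD2 : ((Dp n k)^2).coeff (2*n+1) = 0 :=
      coeff_eq_zero_of_natDegree_lt (by rw [natDegree_pow, natDegree_Dp (by omega)]; omega)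
    have hM : ((X - C ((k:ℕ):ℝ)) * (Dp n k)^2).coeff (2*n+1) = 1 := by
      have hmon : ((X - C ((k:ℕ):ℝ)) * (Dp n k)^2).Monic :=
        (monic_X_sub_C _).mul ((monic_Dp n k).pow _)
      have hdeg : ((X - C ((k:ℕ):ℝ)) * (Dp n k)^2).natDegree = 2*n+1 := by
        rw [Monic.natDegree_mul (monic_X_sub_C _) ((monic_Dp n k).pow _), natDegree_X_sub_C,
          natDegree_pow, natDegree_Dp (by omega)]
        omega
      rw [← hdeg]
      exact hmon.coeff_natDegree
    rw [hD2, hM, mul_zero, mul_one, zero_add]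
  rw [finset_sum_coeff, hL, Finset.sum_congr rfl hR] at hc
  exact hc.symm

end Stmt14Aux

/-- For `α ≥ 1`, `ν ≥ 0` and `r ∈ {0,1,2}`:
`∑_{k=0}^{ν+α} (2 k^r C(ν+α,k)² C(ν+k,k)² S_{1,k}(α,ν) − r k^{r−1} C(ν+α,k)² C(ν+k,k)²) = 0`
(the term `r k^{r−1}` being `0` when `r = 0`; here `r − 1` is truncated subtraction, so the
factor `(r : ℝ)` already makes the term vanish at `r = 0`). -/
theorem stmt_14 (α ν : ℕ) (hα : 1 ≤ α) (r : ℕ) (hr : r ≤ 2) :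
    ∑ k ∈ Finset.range (ν + α + 1),
      (2 * (k : ℝ) ^ r * (Nat.choose (ν + α) k : ℝ) ^ 2 * (Nat.choose (ν + k) k : ℝ) ^ 2 *
          S1 α ν k -
        (r : ℝ) * (k : ℝ) ^ (r - 1) * (Nat.choose (ν + α) k : ℝ) ^ 2 *
          (Nat.choose (ν + k) k : ℝ) ^ 2) = 0 := by
  have h := Stmt14Aux.sum_Bc α ν r hα hr
  simp only [Stmt14Aux.Bc] at h
  rw [← Finset.mul_sum] at h
  have hc2 : -((Nat.factorial ν : ℝ) / (Nat.factorial (ν + α) : ℝ)) ^ 2 ≠ 0 := by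
    have h0 : ((Nat.factorial ν : ℝ) / (Nat.factorial (ν + α) : ℝ)) ≠ 0 := by positivity
    simpa using pow_ne_zero 2 h0
  have h2 : ∑ k ∈ Finset.range (ν + α + 1), Stmt14Aux.fS α ν r k = 0 :=
    (mul_eq_zero.1 h).resolve_left hc2
  simpa only [Stmt14Aux.fS] using h2
end

section
/- Define Q^{(2)}_ν = ∑_{k=0}^{ν+1} k² · C(ν+1, k)² · C(ν+k, ν)² for integers ν ≥ 0. Then for every integer ν ≥ 1, with τ = ν+1: (τ+1)(2τ−1) τ² (τ³ − (τ−1)³) · Q^{(2)}_{ν+1} − 2(102τ⁶ − 68τ⁴ + 21τ² − 3) · Q^{(2)}_ν + (τ−1)(2τ+1) τ² ((τ+1)³ − τ³) · Q^{(2)}_{ν−1} = 0. -/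
/-- `Q^{(2)}_ν = ∑_{k=0}^{ν+1} k² · C(ν+1,k)² · C(ν+k,ν)²`. -/
def Q2 (ν : ℕ) : ℚ :=
  ∑ k ∈ Finset.range (ν + 2),
    (k : ℚ) ^ 2 * (Nat.choose (ν + 1) k : ℚ) ^ 2 * (Nat.choose (ν + k) ν : ℚ) ^ 2

/-- The WZ certificate polynomial. -/
def qcert (n k : ℚ) : ℚ :=
  -252 * n^1 - 1854 * n^2 - 5696 * n^3 - 9456 * n^4 - 9120 * n^5 - 5104 * n^6 - 1536 * n^7
  - 192 * n^8 - 168 * k^1 - 616 * n^1 * k^1 + 636 * n^2 * k^1 + 6960 * n^3 * k^1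
  + 15404 * n^4 * k^1 + 16800 * n^5 * k^1 + 9968 * n^6 * k^1 + 3072 * n^7 * k^1
  + 384 * n^8 * k^1 + 402 * k^2 + 2428 * n^1 * k^2 + 5502 * n^2 * k^2 + 4928 * n^3 * k^2
  - 1040 * n^4 * k^2 - 5664 * n^5 * k^2 - 4528 * n^6 * k^2 - 1536 * n^7 * k^2
  - 192 * n^8 * k^2 - 300 * k^3 - 2000 * n^1 * k^3 - 5496 * n^2 * k^3 - 7952 * n^3 * k^3
  - 6308 * n^4 * k^3 - 2592 * n^5 * k^3 - 432 * n^6 * k^3 + 66 * k^4 + 440 * n^1 * k^4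
  + 1212 * n^2 * k^4 + 1760 * n^3 * k^4 + 1400 * n^4 * k^4 + 576 * n^5 * k^4 + 96 * n^6 * k^4

/-- The telescoping term. -/
def gfun (m k : ℕ) : ℚ :=
  (k : ℚ)^4 * qcert ((m : ℚ) + 1) (k : ℚ) * (Nat.choose (m+3) k : ℚ)^2
    * (Nat.choose (m+k) k : ℚ)^2 / (((m:ℚ)+1)^2 * ((m:ℚ)+2)^2 * ((m:ℚ)+3)^2)

lemma choose_ratio_n (n k : ℕ) :
    ((n.choose k : ℚ)) * ((n : ℚ) + 1) = (((n+1).choose k : ℚ)) * ((n : ℚ) + 1 - (k : ℚ)) := by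
  rcases le_or_gt k (n+1) with h | h
  · have h0 := Nat.choose_mul_succ_eq n k
    have : ((n.choose k * (n + 1) : ℕ) : ℚ) = (((n + 1).choose k * (n + 1 - k) : ℕ) : ℚ) := by
      exact_mod_cast congrArg (Nat.cast : ℕ → ℚ) h0
    push_cast [Nat.cast_sub h] at this
    linarith [this]
  · rw [Nat.choose_eq_zero_of_lt (by omega), Nat.choose_eq_zero_of_lt h]
    ring

lemma choose_ratio_k (n k : ℕ) :
    ((k : ℚ) + 1) * (((n+1).choose (k+1) : ℚ)) = ((n : ℚ) + 1) * ((n.choose k : ℚ)) := by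
  have h0 := Nat.add_one_mul_choose_eq n k
  have : (((n+1) * n.choose k : ℕ) : ℚ) = (((n + 1).choose (k+1) * (k+1) : ℕ) : ℚ) := by
    exact_mod_cast congrArg (Nat.cast : ℕ → ℚ) h0
  push_cast at this
  linarith [this]

/-- The per-term WZ identity. -/
lemma per_term (m k : ℕ) :
    ((m:ℚ)+3) * (2*(m:ℚ)+3) * ((m:ℚ)+2)^2 * (((m:ℚ)+2)^3 - ((m:ℚ)+1)^3)
        * ((k : ℚ) ^ 2 * (Nat.choose (m + 3) k : ℚ) ^ 2 * (Nat.choose (m + 2 + k) (m+2) : ℚ) ^ 2)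
      - 2 * (102*((m:ℚ)+2)^6 - 68*((m:ℚ)+2)^4 + 21*((m:ℚ)+2)^2 - 3)
        * ((k : ℚ) ^ 2 * (Nat.choose (m + 2) k : ℚ) ^ 2 * (Nat.choose (m + 1 + k) (m+1) : ℚ) ^ 2)
      + ((m:ℚ)+1) * (2*(m:ℚ)+5) * ((m:ℚ)+2)^2 * (((m:ℚ)+3)^3 - ((m:ℚ)+2)^3)
        * ((k : ℚ) ^ 2 * (Nat.choose (m + 1) k : ℚ) ^ 2 * (Nat.choose (m + k) m : ℚ) ^ 2)
      = gfun m (k+1) - gfun m k := by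
  -- symmetry rewrites
  have s2 : Nat.choose (m + 2 + k) (m+2) = Nat.choose (m + 2 + k) k := Nat.choose_symm_add
  have s1 : Nat.choose (m + 1 + k) (m+1) = Nat.choose (m + 1 + k) k := Nat.choose_symm_add
  have s0 : Nat.choose (m + k) m = Nat.choose (m + k) k := Nat.choose_symm_add
  rw [s2, s1, s0]
  set a : ℚ := (Nat.choose (m+3) k : ℚ) with ha
  set b : ℚ := (Nat.choose (m+k) k : ℚ) with hb
  -- ratio identities
  have h1 : ((Nat.choose (m+2) k : ℚ)) * ((m:ℚ) + 3) = a * ((m:ℚ) + 3 - (k:ℚ)) := by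
    have := choose_ratio_n (m+2) k
    push_cast at this ⊢
    convert this using 2 <;> ring
  have h2 : ((Nat.choose (m+1) k : ℚ)) * ((m:ℚ) + 2) =
      ((Nat.choose (m+2) k : ℚ)) * ((m:ℚ) + 2 - (k:ℚ)) := by
    have := choose_ratio_n (m+1) k
    push_cast at this ⊢
    convert this using 2 <;> ring
  have h3 : b * ((m:ℚ) + (k:ℚ) + 1) = ((Nat.choose (m+1+k) k : ℚ)) * ((m:ℚ) + 1) := by
    have := choose_ratio_n (m+k) k
    have e : m + k + 1 = m + 1 + k := by ring
    rw [e] at this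
    push_cast at this ⊢
    linarith [this]
  have h4 : ((Nat.choose (m+1+k) k : ℚ)) * ((m:ℚ) + (k:ℚ) + 2) =
      ((Nat.choose (m+2+k) k : ℚ)) * ((m:ℚ) + 2) := by
    have := choose_ratio_n (m+1+k) k
    have e : m + 1 + k + 1 = m + 2 + k := by ring
    rw [e] at this
    push_cast at this ⊢
    linarith [this]
  have h5 : ((k:ℚ) + 1) * ((Nat.choose (m+3) (k+1) : ℚ)) =
      ((m:ℚ) + 3) * ((Nat.choose (m+2) k : ℚ)) := by
    have := choose_ratio_k (m+2) k
    push_cast at this ⊢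
    linarith [this]
  have h6 : ((k:ℚ) + 1) * ((Nat.choose (m+k+1) (k+1) : ℚ)) = ((m:ℚ) + (k:ℚ) + 1) * b := by
    have := choose_ratio_k (m+k) k
    push_cast at this ⊢
    linarith [this]
  -- solve for each choose value
  have m1 : ((m:ℚ) + 1) ≠ 0 := by positivity
  have m2 : ((m:ℚ) + 2) ≠ 0 := by positivity
  have m3 : ((m:ℚ) + 3) ≠ 0 := by positivity
  have k1 : ((k:ℚ) + 1) ≠ 0 := by positivity
  have e2 : ((Nat.choose (m+2) k : ℚ)) = a * ((m:ℚ) + 3 - (k:ℚ)) / ((m:ℚ) + 3) := by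
    field_simp; linarith [h1]
  have e1 : ((Nat.choose (m+1) k : ℚ)) =
      a * ((m:ℚ) + 3 - (k:ℚ)) * ((m:ℚ) + 2 - (k:ℚ)) / (((m:ℚ) + 3) * ((m:ℚ) + 2)) := by
    rw [e2] at h2
    field_simp at h2 ⊢
    linarith [h2]
  have e3 : ((Nat.choose (m+1+k) k : ℚ)) = b * ((m:ℚ) + (k:ℚ) + 1) / ((m:ℚ) + 1) := by
    field_simp; linarith [h3]
  have e4 : ((Nat.choose (m+2+k) k : ℚ)) =
      b * ((m:ℚ) + (k:ℚ) + 1) * ((m:ℚ) + (k:ℚ) + 2) / (((m:ℚ) + 1) * ((m:ℚ) + 2)) := by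
    rw [e3] at h4
    field_simp at h4 ⊢
    linarith [h4]
  have e5 : ((Nat.choose (m+3) (k+1) : ℚ)) =
      ((m:ℚ) + 3) * (a * ((m:ℚ) + 3 - (k:ℚ)) / ((m:ℚ) + 3)) / ((k:ℚ) + 1) := by
    rw [e2] at h5
    field_simp at h5 ⊢
    linarith [h5]
  have e6 : ((Nat.choose (m+k+1) (k+1) : ℚ)) = ((m:ℚ) + (k:ℚ) + 1) * b / ((k:ℚ) + 1) := by
    field_simp; linarith [h6]
  rw [e1, e2, e3, e4]
  unfold gfun
  have ek : ((m : ℕ) + (k+1) : ℕ) = m + k + 1 := by ring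
  rw [ek, e5, e6]
  rw [show ((↑(k+1) : ℚ)) = (k:ℚ) + 1 by push_cast; ring]
  unfold qcert
  field_simp
  ring

/-- For every `ν ≥ 1`, with `τ = ν+1`:
`(τ+1)(2τ−1)τ²(τ³−(τ−1)³) Q^{(2)}_{ν+1} − 2(102τ⁶−68τ⁴+21τ²−3) Q^{(2)}_ν +
(τ−1)(2τ+1)τ²((τ+1)³−τ³) Q^{(2)}_{ν−1} = 0`. -/
theorem stmt_17 :
    ∀ ν : ℕ, 1 ≤ ν → ∀ τ : ℚ, τ = (ν : ℚ) + 1 →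
      (τ + 1) * (2 * τ - 1) * τ ^ 2 * (τ ^ 3 - (τ - 1) ^ 3) * Q2 (ν + 1) -
        2 * (102 * τ ^ 6 - 68 * τ ^ 4 + 21 * τ ^ 2 - 3) * Q2 ν +
        (τ - 1) * (2 * τ + 1) * τ ^ 2 * ((τ + 1) ^ 3 - τ ^ 3) * Q2 (ν - 1) = 0 := by
  intro ν hν τ hτ
  obtain ⟨m, rfl⟩ : ∃ m, ν = m + 1 := ⟨ν - 1, by omega⟩
  have key :
      ((m:ℚ)+3) * (2*(m:ℚ)+3) * ((m:ℚ)+2)^2 * (((m:ℚ)+2)^3 - ((m:ℚ)+1)^3) * Q2 (m+2)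
      - 2 * (102*((m:ℚ)+2)^6 - 68*((m:ℚ)+2)^4 + 21*((m:ℚ)+2)^2 - 3) * Q2 (m+1)
      + ((m:ℚ)+1) * (2*(m:ℚ)+5) * ((m:ℚ)+2)^2 * (((m:ℚ)+3)^3 - ((m:ℚ)+2)^3) * Q2 m = 0 := by
    have hQ2 : Q2 (m+2) = ∑ k ∈ Finset.range (m+4),
        (k : ℚ) ^ 2 * (Nat.choose (m + 3) k : ℚ) ^ 2 * (Nat.choose (m + 2 + k) (m+2) : ℚ) ^ 2 := by
      unfold Q2
      norm_num
    have hQ1 : Q2 (m+1) = ∑ k ∈ Finset.range (m+4),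
        (k : ℚ) ^ 2 * (Nat.choose (m + 2) k : ℚ) ^ 2 * (Nat.choose (m + 1 + k) (m+1) : ℚ) ^ 2 := by
      unfold Q2
      rw [show m + 1 + 2 = m + 3 by ring, Finset.sum_range_succ (n := m+3)]
      rw [Nat.choose_eq_zero_of_lt (by omega : m + 2 < m + 3)]
      norm_num
    have hQ0 : Q2 m = ∑ k ∈ Finset.range (m+4),
        (k : ℚ) ^ 2 * (Nat.choose (m + 1) k : ℚ) ^ 2 * (Nat.choose (m + k) m : ℚ) ^ 2 := by
      unfold Q2
      rw [Finset.sum_range_succ (n := m+3), Finset.sum_range_succ (n := m+2)]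
      rw [Nat.choose_eq_zero_of_lt (by omega : m + 1 < m + 3),
        Nat.choose_eq_zero_of_lt (by omega : m + 1 < m + 2)]
      norm_num
    rw [hQ2, hQ1, hQ0, Finset.mul_sum, Finset.mul_sum, Finset.mul_sum]
    rw [← Finset.sum_sub_distrib, ← Finset.sum_add_distrib]
    have tele : ∀ k ∈ Finset.range (m+4),
        (((m:ℚ)+3) * (2*(m:ℚ)+3) * ((m:ℚ)+2)^2 * (((m:ℚ)+2)^3 - ((m:ℚ)+1)^3)
          * ((k : ℚ) ^ 2 * (Nat.choose (m + 3) k : ℚ) ^ 2 * (Nat.choose (m + 2 + k) (m+2) : ℚ) ^ 2)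
        - 2 * (102*((m:ℚ)+2)^6 - 68*((m:ℚ)+2)^4 + 21*((m:ℚ)+2)^2 - 3)
          * ((k : ℚ) ^ 2 * (Nat.choose (m + 2) k : ℚ) ^ 2 * (Nat.choose (m + 1 + k) (m+1) : ℚ) ^ 2)
        + ((m:ℚ)+1) * (2*(m:ℚ)+5) * ((m:ℚ)+2)^2 * (((m:ℚ)+3)^3 - ((m:ℚ)+2)^3)
          * ((k : ℚ) ^ 2 * (Nat.choose (m + 1) k : ℚ) ^ 2 * (Nat.choose (m + k) m : ℚ) ^ 2))
        = gfun m (k+1) - gfun m k := fun k _ => per_term m k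
    rw [Finset.sum_congr rfl tele, Finset.sum_range_sub (gfun m)]
    have g0 : gfun m 0 = 0 := by unfold gfun; norm_num
    have gN : gfun m (m+4) = 0 := by
      unfold gfun
      rw [Nat.choose_eq_zero_of_lt (by omega : m + 3 < m + 4)]
      norm_num
    rw [g0, gN]; ring
  have hν1 : ((m + 1 : ℕ) : ℚ) = (m : ℚ) + 1 := by push_cast; ring
  rw [show m + 1 + 1 = m + 2 from rfl, show m + 1 - 1 = m from rfl, hτ, hν1]
  linear_combination key
end

section
/- Define g_ν = (1/(ν+1)²) · ∑_{k=0}^{ν+1} C(ν+1, k)² · C(ν+k, ν)² for integers ν ≥ 0. Then for every integer ν ≥ 1, with τ = ν+1: (τ+1)⁵ (2τ−1)(τ³ − (τ−1)³) · g_{ν+1} − 2τ² (102τ⁶ − 68τ⁴ + 21τ² − 3) · g_ν + (τ−1)⁵ (2τ+1)((τ+1)³ − τ³) · g_{ν−1} = 0. -/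
/-- `g_ν = (1/(ν+1)²) · ∑_{k=0}^{ν+1} C(ν+1,k)² · C(ν+k,ν)²`. -/
def g (ν : ℕ) : ℚ :=
  (1 / ((ν : ℚ) + 1) ^ 2) *
    ∑ k ∈ Finset.range (ν + 2),
      (Nat.choose (ν + 1) k : ℚ) ^ 2 * (Nat.choose (ν + k) ν : ℚ) ^ 2

namespace Stmt18Aux

lemma ruleA (N r : ℕ) :
    (N.choose (r+1) : ℚ) * ((r:ℚ)+1) = (N.choose r : ℚ) * ((N:ℚ) - (r:ℚ)) := by
  rcases le_or_gt r N with h | h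
  · have h1 := Nat.choose_succ_right_eq N r
    have h2 : ((N.choose (r+1) * (r+1) : ℕ) : ℚ) = ((N.choose r * (N - r) : ℕ) : ℚ) := by
      exact_mod_cast congrArg (Nat.cast : ℕ → ℚ) h1
    push_cast [Nat.cast_sub h] at h2
    linear_combination h2
  · simp [Nat.choose_eq_zero_of_lt h, Nat.choose_eq_zero_of_lt (Nat.lt_succ_of_lt h)]

lemma ruleB (N r : ℕ) :
    ((N:ℚ)+1) * (N.choose r : ℚ) = ((N+1).choose r : ℚ) * ((N:ℚ)+1-(r:ℚ)) := by
  have h1 := Nat.add_one_mul_choose_eq N r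
  have h2 : (((N+1) * N.choose r : ℕ) : ℚ) = (((N+1).choose (r+1) * (r+1) : ℕ) : ℚ) := by
    exact_mod_cast congrArg (Nat.cast : ℕ → ℚ) h1
  have h3 := ruleA (N+1) r
  push_cast at h2 h3
  linear_combination h2 + h3

/-- The Zeilberger certificate polynomial. -/
def Qp (n k : ℚ) : ℚ :=
  (-420*n - 3538*n^2 - 13056*n^3 - 27968*n^4 - 38528*n^5 - 35392*n^6
      - 21632*n^7 - 8464*n^8 - 1920*n^9 - 192*n^10)
  + (-336 - 2312*n - 6756*n^2 - 11328*n^3 - 12296*n^4 - 8904*n^5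
      - 4172*n^6 - 1152*n^7 - 144*n^8)*k
  + (390 + 2516*n + 6730*n^2 + 10144*n^3 + 9912*n^4 + 6576*n^5
      + 2888*n^6 + 768*n^7 + 96*n^8)*k^2
  + (-180 - 1032*n - 2276*n^2 - 2528*n^3 - 1592*n^4 - 576*n^5 - 96*n^6)*k^3
  + (30 + 152*n + 268*n^2 + 192*n^3 + 48*n^4)*k^4

/-- Telescoping sequence. -/
def Gt (m : ℕ) : ℕ → ℚ
  | 0 => 0
  | j+1 => Qp ((m:ℚ)+1) ((j:ℚ)+1) * ((m+2).choose j : ℚ)^2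
      * ((m+1+j).choose (m+1) : ℚ)^2 / ((m:ℚ)+2)^4

lemma tele (m k : ℕ) :
    ((m:ℚ)+3)^3*(2*((m:ℚ)+2)-1)*(3*((m:ℚ)+2)^2-3*((m:ℚ)+2)+1)
        * ((m+3).choose k : ℚ)^2 * ((m+2+k).choose (m+2) : ℚ)^2
      - 2*(102*((m:ℚ)+2)^6 - 68*((m:ℚ)+2)^4 + 21*((m:ℚ)+2)^2 - 3)
        * ((m+2).choose k : ℚ)^2 * ((m+1+k).choose (m+1) : ℚ)^2
      + ((m:ℚ)+1)^3*(2*((m:ℚ)+2)+1)*(3*((m:ℚ)+2)^2+3*((m:ℚ)+2)+1)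
        * ((m+1).choose k : ℚ)^2 * ((m+k).choose m : ℚ)^2
    = Gt m (k+1) - Gt m k := by
  have hm : ((m:ℚ)+2) ≠ 0 := by positivity
  cases k with
  | zero =>
      simp only [Gt, Qp, Nat.add_zero, Nat.choose_zero_right, Nat.choose_self,
        Nat.cast_zero, Nat.cast_one]
      field_simp
      ring
  | succ j =>
      have hx : ((j:ℚ)+1) ≠ 0 := by positivity
      have e1 : ((m+3).choose (j+1) : ℚ)
          = ((m:ℚ)+3) * ((m+2).choose j : ℚ) / ((j:ℚ)+1) := by
        rw [eq_div_iff hx]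
        have a1 := ruleA (m+3) j
        have b1 := ruleB (m+2) j
        push_cast at a1 b1
        linear_combination a1 - b1
      have e2 : ((m+2).choose (j+1) : ℚ)
          = ((m+2).choose j : ℚ) * (((m:ℚ)+2) - (j:ℚ)) / ((j:ℚ)+1) := by
        rw [eq_div_iff hx]
        have a2 := ruleA (m+2) j
        push_cast at a2
        linear_combination a2
      have e3 : ((m+1).choose (j+1) : ℚ)
          = ((m+2).choose j : ℚ) * (((m:ℚ)+2) - (j:ℚ)) * (((m:ℚ)+1) - (j:ℚ))
            / (((j:ℚ)+1) * ((m:ℚ)+2)) := by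
        rw [eq_div_iff (by positivity)]
        have a3 := ruleA (m+1) j
        have b3 := ruleB (m+1) j
        push_cast at a3 b3
        linear_combination ((m:ℚ)+2) * a3 + (((m:ℚ)+1) - (j:ℚ)) * b3
      have e4 : ((m+3+j).choose (m+2) : ℚ)
          = ((m:ℚ)+3+(j:ℚ)) * ((m:ℚ)+2+(j:ℚ)) * ((m+1+j).choose (m+1) : ℚ)
            / (((j:ℚ)+1) * ((m:ℚ)+2)) := by
        rw [eq_div_iff (by positivity)]
        have a4 := ruleB (m+2+j) (m+2)
        have b4 : (((m+1+j+1) * (m+1+j).choose (m+1) : ℕ) : ℚ)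
            = (((m+1+j+1).choose (m+1+1) * (m+1+1) : ℕ) : ℚ) := by
          exact_mod_cast congrArg (Nat.cast : ℕ → ℚ) (Nat.add_one_mul_choose_eq (m+1+j) (m+1))
        have hidx : m+2+j+1 = m+3+j := by omega
        have hidx2 : m+1+j+1 = m+2+j := by omega
        have hidx3 : m+1+1 = m+2 := rfl
        rw [hidx] at a4
        rw [hidx2, hidx3] at b4
        push_cast at a4 b4
        linear_combination (-((m:ℚ)+2)) * a4 - (((m:ℚ)+3+(j:ℚ))) * b4
      have e5 : ((m+2+j).choose (m+1) : ℚ)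
          = ((m:ℚ)+2+(j:ℚ)) * ((m+1+j).choose (m+1) : ℚ) / ((j:ℚ)+1) := by
        rw [eq_div_iff hx]
        have a5 := ruleB (m+1+j) (m+1)
        have hidx : m+1+j+1 = m+2+j := by omega
        rw [hidx] at a5
        push_cast at a5
        linear_combination -a5
      have e6 : ((m+1+j).choose m : ℚ)
          = ((m:ℚ)+1) * ((m+1+j).choose (m+1) : ℚ) / ((j:ℚ)+1) := by
        rw [eq_div_iff hx]
        have a6 := ruleA (m+1+j) m
        push_cast at a6
        linear_combination -a6
      have hidxA : m+2+(j+1) = m+3+j := by omega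
      have hidxB : m+1+(j+1) = m+2+j := by omega
      have hidxC : m+(j+1) = m+1+j := by omega
      rw [hidxA, hidxB, hidxC]
      show _ = Qp ((m:ℚ)+1) (((j+1:ℕ):ℚ)+1) * ((m+2).choose (j+1) : ℚ)^2
          * ((m+1+(j+1)).choose (m+1) : ℚ)^2 / ((m:ℚ)+2)^4
        - Qp ((m:ℚ)+1) ((j:ℚ)+1) * ((m+2).choose j : ℚ)^2
          * ((m+1+j).choose (m+1) : ℚ)^2 / ((m:ℚ)+2)^4
      rw [hidxB]
      rw [e1, e2, e3, e4, e5, e6]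
      simp only [Qp]
      push_cast
      field_simp
      ring

end Stmt18Aux

/-- For every `ν ≥ 1`, with `τ = ν+1`:
`(τ+1)⁵(2τ−1)(τ³−(τ−1)³) g_{ν+1} − 2τ²(102τ⁶−68τ⁴+21τ²−3) g_ν +
(τ−1)⁵(2τ+1)((τ+1)³−τ³) g_{ν−1} = 0`. -/
theorem stmt_18 :
    ∀ ν : ℕ, 1 ≤ ν → ∀ τ : ℚ, τ = (ν : ℚ) + 1 →
      (τ + 1) ^ 5 * (2 * τ - 1) * (τ ^ 3 - (τ - 1) ^ 3) * g (ν + 1) -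
        2 * τ ^ 2 * (102 * τ ^ 6 - 68 * τ ^ 4 + 21 * τ ^ 2 - 3) * g ν +
        (τ - 1) ^ 5 * (2 * τ + 1) * ((τ + 1) ^ 3 - τ ^ 3) * g (ν - 1) = 0 := by
  intro ν hν τ hτ
  obtain ⟨m, rfl⟩ : ∃ m, ν = m + 1 := ⟨ν - 1, by omega⟩
  subst hτ
  open Stmt18Aux in
  -- the telescoped key identity
  have key : ((m:ℚ)+3)^3*(2*((m:ℚ)+2)-1)*(3*((m:ℚ)+2)^2-3*((m:ℚ)+2)+1)
        * ∑ k ∈ Finset.range (m+4), ((m+3).choose k : ℚ)^2 * ((m+2+k).choose (m+2) : ℚ)^2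
      - 2*(102*((m:ℚ)+2)^6 - 68*((m:ℚ)+2)^4 + 21*((m:ℚ)+2)^2 - 3)
        * ∑ k ∈ Finset.range (m+4), ((m+2).choose k : ℚ)^2 * ((m+1+k).choose (m+1) : ℚ)^2
      + ((m:ℚ)+1)^3*(2*((m:ℚ)+2)+1)*(3*((m:ℚ)+2)^2+3*((m:ℚ)+2)+1)
        * ∑ k ∈ Finset.range (m+4), ((m+1).choose k : ℚ)^2 * ((m+k).choose m : ℚ)^2 = 0 := by
    have hG0 : Stmt18Aux.Gt m 0 = 0 := rfl
    have hGend : Stmt18Aux.Gt m (m+4) = 0 := by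
      have hz : (m+2).choose (m+3) = 0 := Nat.choose_eq_zero_of_lt (by omega)
      show Stmt18Aux.Qp _ _ * ((m+2).choose (m+3) : ℚ)^2 * _ / _ = 0
      rw [hz]
      push_cast
      ring
    calc _ = ∑ k ∈ Finset.range (m+4), (Stmt18Aux.Gt m (k+1) - Stmt18Aux.Gt m k) := by
          rw [Finset.mul_sum, Finset.mul_sum, Finset.mul_sum, ← Finset.sum_sub_distrib,
            ← Finset.sum_add_distrib]
          exact Finset.sum_congr rfl fun k _ => by linear_combination Stmt18Aux.tele m k
      _ = Stmt18Aux.Gt m (m+4) - Stmt18Aux.Gt m 0 := Finset.sum_range_sub _ _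
      _ = 0 := by rw [hG0, hGend]; ring
  -- shrink the middle and last ranges
  have s0 : ∑ k ∈ Finset.range (m+4), ((m+2).choose k : ℚ)^2 * ((m+1+k).choose (m+1) : ℚ)^2
      = ∑ k ∈ Finset.range (m+3), ((m+2).choose k : ℚ)^2 * ((m+1+k).choose (m+1) : ℚ)^2 := by
    rw [Finset.sum_range_succ]
    have hz : (m+2).choose (m+3) = 0 := Nat.choose_eq_zero_of_lt (by omega)
    rw [hz]
    push_cast
    ring
  have s1 : ∑ k ∈ Finset.range (m+4), ((m+1).choose k : ℚ)^2 * ((m+k).choose m : ℚ)^2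
      = ∑ k ∈ Finset.range (m+2), ((m+1).choose k : ℚ)^2 * ((m+k).choose m : ℚ)^2 := by
    rw [Finset.sum_range_succ, Finset.sum_range_succ]
    have hz1 : (m+1).choose (m+3) = 0 := Nat.choose_eq_zero_of_lt (by omega)
    have hz2 : (m+1).choose (m+2) = 0 := Nat.choose_eq_zero_of_lt (by omega)
    rw [hz1, hz2]
    push_cast
    ring
  rw [s0, s1] at key
  simp only [g, Nat.add_sub_cancel]
  have h1 : m+1+1 = m+2 := rfl
  have h2 : m+2+1 = m+3 := rfl
  have h3 : m+1+2 = m+3 := rfl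
  have h4 : m+2+2 = m+4 := rfl
  rw [h1, h2, h3, h4]
  push_cast
  have d1 : ((m:ℚ)+1) ≠ 0 := by positivity
  have d2 : ((m:ℚ)+2) ≠ 0 := by positivity
  have d3 : ((m:ℚ)+3) ≠ 0 := by positivity
  field_simp
  linear_combination (((m:ℚ)+1)^2*((m:ℚ)+3)^2) * key
end
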